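/- arXiv:1503.05629 — 9 statements merged into one kernel-verified Lean document; each statement's English description precedes it below -/
import Mathlib

section
/- Let f be a continuous function on [0,b] with b > 0 such that f is differentiable with negative derivative on (0,b), f(b) = 0, and ∫₀^b f dx = 1. Assuming the differential entropies of f and of its inverse f⁻¹ both exist, the sum of the differential entropies satisfies -∫₀^b f·ln(f) dx - ∫₀^{f(0)} f⁻¹·ln(f⁻¹) dy = -1 - ∫₀^b f·ln(x·f(x)) dx. -/
open MeasureTheory intervalIntegral Real


lemma my_intervalIntegrable_log {b : ℝ} (hb : 0 < b) :
    IntervalIntegrable Real.log volume 0 b := by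
  have h1 : IntervalIntegrable (fun x : ℝ => 2 * x ^ (-(1:ℝ)/2) + |Real.log b|) volume 0 b :=
    ((intervalIntegrable_rpow' (by norm_num)).const_mul 2).add intervalIntegrable_const
  rw [intervalIntegrable_iff_integrableOn_Ioc_of_le hb.le] at h1 ⊢
  refine h1.mono' Real.measurable_log.aestronglyMeasurable ?_
  filter_upwards [ae_restrict_mem measurableSet_Ioc] with x hx
  have hx0 : 0 < x := hx.1
  have hrpos : 0 < x ^ (-(1:ℝ)/2) := Real.rpow_pos_of_pos hx0 _
  rcases le_or_gt x 1 with h | h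
  · have h2 : Real.log (x ^ (-(1:ℝ)/2)) ≤ x ^ (-(1:ℝ)/2) - 1 :=
      Real.log_le_sub_one_of_pos hrpos
    rw [Real.log_rpow hx0] at h2
    have hlx : Real.log x ≤ 0 := Real.log_nonpos hx0.le h
    rw [Real.norm_eq_abs, abs_of_nonpos hlx]
    have : (0:ℝ) ≤ |Real.log b| := abs_nonneg _
    nlinarith
  · have hlx : 0 ≤ Real.log x := Real.log_nonneg h.le
    rw [Real.norm_eq_abs, abs_of_nonneg hlx]
    have hlb : Real.log x ≤ Real.log b := Real.log_le_log hx0 hx.2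
    have : Real.log b ≤ |Real.log b| := le_abs_self _
    nlinarith


/-- Let `f` be continuous on `[0,b]`, differentiable with negative derivative on `(0,b)`,
with `f b = 0` and `∫₀ᵇ f = 1`.  If `g` is the inverse function of `f` (mapping
`[0, f 0]` back to `[0,b]`) and the differential entropies of `f` and `g` both exist
(i.e. the corresponding integrals converge), then the sum of the two differential
entropies equals `-1 - ∫₀ᵇ f ln(x f(x)) dx`. -/
theorem sum_differential_entropies (b : ℝ) (hb : 0 < b) (f g : ℝ → ℝ)
    (hf_cont : ContinuousOn f (Set.Icc 0 b))
    (hf_diff : ∀ x ∈ Set.Ioo 0 b, DifferentiableAt ℝ f x)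
    (hf_deriv_neg : ∀ x ∈ Set.Ioo 0 b, deriv f x < 0)
    (hfb : f b = 0)
    (hf_int : ∫ x in (0:ℝ)..b, f x = 1)
    (hg_left : ∀ x ∈ Set.Icc 0 b, g (f x) = x)
    (hg_right : ∀ y ∈ Set.Icc 0 (f 0), f (g y) = y)
    (h_ent_f : IntervalIntegrable (fun x => f x * Real.log (f x)) volume 0 b)
    (h_ent_g : IntervalIntegrable (fun y => g y * Real.log (g y)) volume 0 (f 0)) :
    (-∫ x in (0:ℝ)..b, f x * Real.log (f x)) -
        ∫ y in (0:ℝ)..(f 0), g y * Real.log (g y) =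
      -1 - ∫ x in (0:ℝ)..b, f x * Real.log (x * f x) := by
  have hanti : StrictAntiOn f (Set.Icc 0 b) := by
    apply strictAntiOn_of_deriv_neg (convex_Icc 0 b) hf_cont
    intro x hx
    rw [interior_Icc] at hx
    exact hf_deriv_neg x hx
  have hf0pos : 0 < f 0 := by
    have := hanti (Set.left_mem_Icc.2 hb.le) (Set.right_mem_Icc.2 hb.le) hb
    rwa [hfb] at this
  have hfpos : ∀ x ∈ Set.Ico 0 b, 0 < f x := by
    intro x hx
    have := hanti (Set.mem_Icc.2 ⟨hx.1, hx.2.le⟩) (Set.right_mem_Icc.2 hb.le) hx.2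
    rwa [hfb] at this
  set s := Set.Ioo (0:ℝ) b with hsdef
  have hmeas : MeasurableSet s := measurableSet_Ioo
  have hderiv : ∀ x ∈ s, HasDerivWithinAt f (deriv f x) s x := fun x hx =>
    ((hf_diff x hx).hasDerivAt).hasDerivWithinAt
  have hinj : Set.InjOn f s := hanti.injOn.mono Set.Ioo_subset_Icc_self
  have himg : f '' s = Set.Ioo 0 (f 0) := by
    apply Set.Subset.antisymm
    · rintro y ⟨x, hx, rfl⟩
      exact ⟨hfpos x ⟨hx.1.le, hx.2⟩,
        hanti (Set.left_mem_Icc.2 hb.le) ⟨hx.1.le, hx.2.le⟩ hx.1⟩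
    · have h := intermediate_value_Ioo' hb.le hf_cont
      rw [hfb] at h
      exact h
  -- change of variables
  have hB : ∫ y in Set.Ioo 0 (f 0), g y * Real.log (g y)
      = ∫ x in s, |deriv f x| * (x * Real.log x) := by
    rw [← himg, integral_image_eq_integral_abs_deriv_smul hmeas hderiv hinj]
    apply setIntegral_congr_fun hmeas
    intro x hx
    have hgf : g (f x) = x := hg_left x ⟨hx.1.le, hx.2.le⟩
    simp [hgf, smul_eq_mul]
  have hG_int : IntegrableOn (fun y => g y * Real.log (g y)) (Set.Ioo 0 (f 0)) := by
    rw [intervalIntegrable_iff_integrableOn_Ioo_of_le hf0pos.le] at h_ent_g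
    exact h_ent_g
  have hphi_int : IntegrableOn (fun x => |deriv f x| * (x * Real.log x)) s := by
    have h2 := (integrableOn_image_iff_integrableOn_abs_deriv_smul hmeas hderiv hinj
      (fun y => g y * Real.log (g y))).mp (by rwa [himg])
    refine h2.congr_fun ?_ hmeas
    intro x hx
    have hgf : g (f x) = x := hg_left x ⟨hx.1.le, hx.2.le⟩
    simp [hgf, smul_eq_mul]
  -- FTC / integration by parts
  have hu_cont : ContinuousOn (fun x => f x * (x * Real.log x)) (Set.Icc 0 b) :=
    hf_cont.mul Real.continuous_mul_log.continuousOn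
  have hu_deriv : ∀ x ∈ Set.Ioo 0 b, HasDerivAt (fun x => f x * (x * Real.log x))
      (deriv f x * (x * Real.log x) + f x * (Real.log x + 1)) x := by
    intro x hx
    have h1 : HasDerivAt f (deriv f x) x := (hf_diff x hx).hasDerivAt
    have h2 : HasDerivAt (fun x : ℝ => x * Real.log x) (Real.log x + 1) x := by
      have := (hasDerivAt_id' x).mul (Real.hasDerivAt_log hx.1.ne')
      rw [one_mul, mul_inv_cancel₀ hx.1.ne'] at this
      exact this
    exact h1.mul h2
  have h_term1 : IntervalIntegrable (fun x => deriv f x * (x * Real.log x)) volume 0 b := by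
    rw [intervalIntegrable_iff_integrableOn_Ioc_of_le hb.le,
      integrableOn_Ioc_iff_integrableOn_Ioo]
    refine MeasureTheory.IntegrableOn.congr_fun hphi_int.neg ?_ hmeas
    intro x hx
    simp only [Pi.neg_apply]
    rw [abs_of_neg (hf_deriv_neg x hx)]
    ring
  have hcontf : ContinuousOn f (Set.uIcc 0 b) := by
    rwa [Set.uIcc_of_le hb.le]
  have h_flog : IntervalIntegrable (fun x => f x * Real.log x) volume 0 b :=
    (my_intervalIntegrable_log hb).continuousOn_mul hcontf
  have hf_ii : IntervalIntegrable f volume 0 b := hcontf.intervalIntegrable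
  have h_term2 : IntervalIntegrable (fun x => f x * (Real.log x + 1)) volume 0 b := by
    have : (fun x => f x * (Real.log x + 1)) = fun x => f x * Real.log x + f x := by
      funext x; ring
    rw [this]
    exact h_flog.add hf_ii
  have hFTC : (∫ x in (0:ℝ)..b, (deriv f x * (x * Real.log x) + f x * (Real.log x + 1))) = 0 := by
    rw [integral_eq_sub_of_hasDerivAt_of_le hb.le hu_cont hu_deriv (h_term1.add h_term2)]
    simp [hfb]
  have ht2 : (∫ x in (0:ℝ)..b, f x * (Real.log x + 1))
      = (∫ x in (0:ℝ)..b, f x * Real.log x) + 1 := by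
    have h : (fun x => f x * (Real.log x + 1)) = fun x => f x * Real.log x + f x := by
      funext x; ring
    rw [h, integral_add h_flog hf_ii, hf_int]
  have ht1 : (∫ x in (0:ℝ)..b, deriv f x * (x * Real.log x))
      = -((∫ x in (0:ℝ)..b, f x * Real.log x) + 1) := by
    rw [integral_add h_term1 h_term2, ht2] at hFTC
    linarith
  have hB2 : (∫ y in (0:ℝ)..(f 0), g y * Real.log (g y))
      = (∫ x in (0:ℝ)..b, f x * Real.log x) + 1 := by
    rw [integral_of_le hf0pos.le, integral_Ioc_eq_integral_Ioo, hB]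
    have habs : (∫ x in s, |deriv f x| * (x * Real.log x))
        = -∫ x in s, deriv f x * (x * Real.log x) := by
      rw [← MeasureTheory.integral_neg]
      apply setIntegral_congr_fun hmeas
      intro x hx
      dsimp only
      rw [abs_of_neg (hf_deriv_neg x hx)]
      ring
    rw [habs]
    have : (∫ x in s, deriv f x * (x * Real.log x))
        = ∫ x in (0:ℝ)..b, deriv f x * (x * Real.log x) := by
      rw [integral_of_le hb.le, integral_Ioc_eq_integral_Ioo]
    rw [this, ht1]
    ring
  have hRHS : (∫ x in (0:ℝ)..b, f x * Real.log (x * f x))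
      = (∫ x in (0:ℝ)..b, f x * Real.log x) + ∫ x in (0:ℝ)..b, f x * Real.log (f x) := by
    have h1 : (∫ x in (0:ℝ)..b, f x * Real.log (x * f x))
        = ∫ x in (0:ℝ)..b, (f x * Real.log x + f x * Real.log (f x)) := by
      rw [integral_of_le hb.le, integral_of_le hb.le,
        integral_Ioc_eq_integral_Ioo, integral_Ioc_eq_integral_Ioo]
      apply setIntegral_congr_fun measurableSet_Ioo
      intro x hx
      dsimp only
      rw [Real.log_mul hx.1.ne' (hfpos x ⟨hx.1.le, hx.2⟩).ne']
      ring
    rw [h1, integral_add h_flog h_ent_f]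
  rw [hB2, hRHS]
  ring
end

section
/- The genial entropy of the corner density f(x) = -ln(x) on (0,1] equals Euler's constant γ. -/
open MeasureTheory Real Set

/-- `t ↦ t^2 e^{-t}` is integrable on `(0,∞)`. -/
lemma intB : IntegrableOn (fun t : ℝ => t ^ 2 * Real.exp (-t)) (Set.Ioi 0) := by
  have h := Real.GammaIntegral_convergent (s := 3) (by norm_num)
  refine (h.congr_fun ?_ measurableSet_Ioi)
  intro t ht
  simp only [show (3:ℝ) - 1 = ((2:ℕ):ℝ) from by norm_num, Real.rpow_natCast]
  ring

/-- `∫₀^∞ t^2 e^{-t} dt = 2`. -/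
lemma valB : ∫ t in Set.Ioi (0:ℝ), t ^ 2 * Real.exp (-t) = 2 := by
  have h := (Real.Gamma_eq_integral (s := 3) (by norm_num)).symm
  have h3 : Real.Gamma 3 = 2 := by
    rw [show (3:ℝ) = (2:ℕ) + 1 by norm_num, Real.Gamma_nat_eq_factorial]
    norm_num
  calc ∫ t in Set.Ioi (0:ℝ), t ^ 2 * Real.exp (-t)
      = ∫ t in Set.Ioi (0:ℝ), Real.exp (-t) * t ^ ((3:ℝ) - 1) := by
        refine setIntegral_congr_fun measurableSet_Ioi fun t ht => ?_
        simp only [show (3:ℝ) - 1 = ((2:ℕ):ℝ) from by norm_num, Real.rpow_natCast]; ring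
    _ = Real.Gamma 3 := h.trans rfl
    _ = 2 := h3

/-- `t ↦ t (log t) e^{-t}` is integrable on `(0,∞)`. -/
lemma intA : IntegrableOn (fun t : ℝ => t * Real.log t * Real.exp (-t)) (Set.Ioi 0) := by
  have hint : IntegrableOn (fun t : ℝ => (1 + t ^ 2) * Real.exp (-t)) (Set.Ioi 0) := by
    have h1 : IntegrableOn (fun t : ℝ => Real.exp (-t)) (Set.Ioi 0) :=
      exp_neg_integrableOn_Ioi 0 one_pos |>.congr_fun
        (fun t _ => by simp only [neg_one_mul]) measurableSet_Ioi
    have : IntegrableOn (fun t : ℝ => Real.exp (-t) + t ^ 2 * Real.exp (-t)) (Set.Ioi 0) :=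
      h1.add intB
    exact this.congr_fun (fun t _ => by ring) measurableSet_Ioi
  refine Integrable.mono' hint ?_ ?_
  · apply Measurable.aestronglyMeasurable
    exact ((measurable_id.mul Real.measurable_log).mul (Real.measurable_exp.comp measurable_neg))
  · filter_upwards [ae_restrict_mem measurableSet_Ioi] with t ht
    have ht0 : (0:ℝ) < t := ht
    have hexp : (0:ℝ) < Real.exp (-t) := Real.exp_pos _
    rw [norm_mul, norm_mul, Real.norm_eq_abs, Real.norm_eq_abs, Real.norm_eq_abs,
      abs_of_pos ht0, abs_of_pos hexp]
    have key : t * |Real.log t| ≤ 1 + t ^ 2 := by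
      rcases le_or_gt 1 t with h | h
      · have hl : |Real.log t| = Real.log t := abs_of_nonneg (Real.log_nonneg h)
        have : Real.log t ≤ t := (Real.log_le_sub_one_of_pos ht0).trans (by linarith)
        nlinarith
      · have hl0 : Real.log t < 0 := Real.log_neg ht0 h
        have hl : |Real.log t| = -Real.log t := abs_of_neg hl0
        have h2 : Real.log t⁻¹ ≤ t⁻¹ - 1 := Real.log_le_sub_one_of_pos (by positivity)
        rw [Real.log_inv] at h2
        have : t * (-Real.log t) ≤ t * (t⁻¹ - 1) :=
          mul_le_mul_of_nonneg_left (by linarith) ht0.le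
        rw [mul_sub, mul_inv_cancel₀ ht0.ne'] at this
        nlinarith
    calc t * |Real.log t| * Real.exp (-t) ≤ (1 + t ^ 2) * Real.exp (-t) :=
      mul_le_mul_of_nonneg_right key hexp.le

/-- `∫₀^∞ t (log t) e^{-t} dt = 1 - γ` (it is `Γ'(2)`). -/
lemma valA : ∫ t in Set.Ioi (0:ℝ), t * Real.log t * Real.exp (-t)
    = 1 - Real.eulerMascheroniConstant := by
  -- derivative of the Gamma integral at 2
  have h1 := Complex.hasDerivAt_GammaIntegral (s := 2) (by norm_num)
  -- derivative of Gamma at 2 from mathlib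
  have h2 : HasDerivAt Complex.Gamma ((1:ℂ) - Real.eulerMascheroniConstant) 2 := by
    have := Complex.hasDerivAt_Gamma_nat 1
    norm_num [harmonic_succ] at this
    convert this using 1
    ring
  -- Gamma = GammaIntegral near 2
  have h3 : HasDerivAt Complex.GammaIntegral ((1:ℂ) - Real.eulerMascheroniConstant) 2 := by
    refine h2.congr_of_eventuallyEq ?_
    have hopen : IsOpen {s : ℂ | 0 < s.re} := isOpen_lt continuous_const Complex.continuous_re
    filter_upwards [hopen.mem_nhds (by norm_num : (0:ℝ) < (2:ℂ).re)] with s hs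
    exact (Complex.Gamma_eq_integral hs).symm
  have h4 := h1.unique h3
  -- identify the integral
  have h5 : (∫ t : ℝ in Set.Ioi 0, (t:ℂ) ^ ((2:ℂ) - 1) * (Real.log t * Real.exp (-t)))
      = ((∫ t in Set.Ioi (0:ℝ), t * Real.log t * Real.exp (-t) : ℝ) : ℂ) := by
    rw [show ((∫ t in Set.Ioi (0:ℝ), t * Real.log t * Real.exp (-t) : ℝ) : ℂ)
      = ∫ t in Set.Ioi (0:ℝ), ((t * Real.log t * Real.exp (-t) : ℝ) : ℂ) from
      (integral_ofReal (𝕜 := ℂ)).symm]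
    refine setIntegral_congr_fun measurableSet_Ioi fun t ht => ?_
    rw [show (2:ℂ) - 1 = 1 by norm_num, Complex.cpow_one]
    push_cast
    ring
  rw [h5] at h4
  exact_mod_cast h4

/-- The genial entropy of the corner density `f(x) = -ln x` on `(0,1]` equals
Euler's constant `γ`. -/
theorem genial_entropy_neg_log :
    -1 - ∫ x in Set.Ioc (0:ℝ) 1, (-Real.log x) * Real.log (x * (-Real.log x)) =
      Real.eulerMascheroniConstant := by
  have himg : (fun t : ℝ => Real.exp (-t)) '' Set.Ioi 0 = Set.Ioo (0:ℝ) 1 := by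
    ext y
    constructor
    · rintro ⟨t, ht, rfl⟩
      exact ⟨Real.exp_pos _, Real.exp_lt_one_iff.mpr (by simpa using ht)⟩
    · rintro ⟨hy0, hy1⟩
      exact ⟨-Real.log y, by simpa using Real.log_neg hy0 hy1, by
        show Real.exp (-(-Real.log y)) = y
        rw [neg_neg, Real.exp_log hy0]⟩
  have hsub : ∫ x in Set.Ioo (0:ℝ) 1, (-Real.log x) * Real.log (x * (-Real.log x))
      = ∫ t in Set.Ioi (0:ℝ), |(-Real.exp (-t))| •
          ((-Real.log (Real.exp (-t))) * Real.log (Real.exp (-t) * (-Real.log (Real.exp (-t))))) := by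
    rw [← himg]
    refine integral_image_eq_integral_abs_deriv_smul (f' := fun t : ℝ => -Real.exp (-t))
      measurableSet_Ioi (fun t _ => ?_) ?_ _
    · have h : HasDerivAt (fun t : ℝ => Real.exp (-t)) (-Real.exp (-t)) t := by
        simpa using (hasDerivAt_neg t).exp
      exact h.hasDerivWithinAt
    intro a _ b _ hab
    have := Real.exp_injective hab
    linarith [this]
  have hsimp : ∫ t in Set.Ioi (0:ℝ), |(-Real.exp (-t))| •
          ((-Real.log (Real.exp (-t))) * Real.log (Real.exp (-t) * (-Real.log (Real.exp (-t)))))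
      = ∫ t in Set.Ioi (0:ℝ),
          (t * Real.log t * Real.exp (-t) - t ^ 2 * Real.exp (-t)) := by
    refine setIntegral_congr_fun measurableSet_Ioi fun t ht => ?_
    have ht0 : (0:ℝ) < t := ht
    rw [abs_neg, abs_of_pos (Real.exp_pos _), Real.log_exp, neg_neg,
      Real.log_mul (Real.exp_ne_zero _) ht0.ne', Real.log_exp]
    simp only [smul_eq_mul]
    ring
  have hval : ∫ t in Set.Ioi (0:ℝ),
      (t * Real.log t * Real.exp (-t) - t ^ 2 * Real.exp (-t))
      = (1 - Real.eulerMascheroniConstant) - 2 := by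
    rw [integral_sub intA intB, valA, valB]
  rw [integral_Ioc_eq_integral_Ioo, hsub, hsimp, hval]
  ring
end

section
/- The genial entropy of the half-Gaussian corner density f(x) = (2/√π)·e^{-x²} on [0,∞) equals (-1 + γ + ln π)/2, where γ is Euler's constant. -/
open MeasureTheory Real Set Filter Asymptotics Topology


lemma mellin_pair :
    MellinConvergent (fun t => Real.log t • (fun x : ℝ => ((Real.exp (-x)) : ℂ)) t) (1/2) ∧
      HasDerivAt (mellin (fun x : ℝ => ((Real.exp (-x)) : ℂ)))
        (mellin (fun t => Real.log t • (fun x : ℝ => ((Real.exp (-x)) : ℂ)) t) (1/2)) (1/2) := by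
  refine mellin_hasDerivAt_of_isBigO_rpow (a := 1) (b := 0) ?_ ?_ (by norm_num) ?_ (by norm_num)
  · refine (Continuous.continuousOn ?_).locallyIntegrableOn measurableSet_Ioi
    exact Complex.continuous_ofReal.comp (Real.continuous_exp.comp continuous_neg)
  · rw [← isBigO_norm_left]
    simp_rw [Complex.norm_real, isBigO_norm_left]
    simpa only [neg_one_mul] using (isLittleO_exp_neg_mul_rpow_atTop zero_lt_one _).isBigO
  · simp_rw [neg_zero, rpow_zero]
    refine isBigO_const_of_tendsto (?_ : Tendsto _ _ (𝓝 (1 : ℂ))) one_ne_zero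
    rw [(by simp : (1 : ℂ) = Real.exp (-0))]
    exact (Complex.continuous_ofReal.comp (Real.continuous_exp.comp continuous_neg)).continuousWithinAt

lemma ptwise {t : ℝ} (ht : t ∈ Ioi (0:ℝ)) :
    (t : ℂ) ^ ((1/2 : ℂ) - 1) * ((Real.log t : ℂ) * (Real.exp (-t) : ℂ)) =
      ((t ^ (-(1/2) : ℝ) * (Real.log t * Real.exp (-t)) : ℝ) : ℂ) := by
  have ht' : (0:ℝ) < t := ht
  rw [show ((1/2:ℂ) - 1) = ((-(1/2) : ℝ) : ℂ) by norm_num, ← Complex.ofReal_cpow ht'.le]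
  push_cast
  ring

lemma L1int : IntegrableOn (fun t : ℝ => t ^ (-(1/2) : ℝ) * (Real.log t * Real.exp (-t))) (Ioi 0) := by
  have h := mellin_pair.1
  rw [MellinConvergent] at h
  have h2 : IntegrableOn (fun t : ℝ =>
      ((t ^ (-(1/2) : ℝ) * (Real.log t * Real.exp (-t)) : ℝ) : ℂ)) (Ioi 0) := by
    refine h.congr_fun (fun t ht => ?_) measurableSet_Ioi
    rw [← ptwise ht]
    simp [Complex.real_smul, smul_eq_mul]
  exact IntegrableOn.congr_fun h2.re (fun t ht => Complex.ofReal_re _) measurableSet_Ioi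

lemma L1 : ∫ t : ℝ in Ioi 0, t ^ (-(1/2) : ℝ) * (Real.log t * Real.exp (-t)) =
    -Real.sqrt π * (Real.eulerMascheroniConstant + 2 * Real.log 2) := by
  have cc : ∀ r : ℝ, (Complex.ofReal r) = @RCLike.ofReal ℂ _ r := fun r => rfl
  have hD : HasDerivAt Complex.GammaIntegral
      (∫ t : ℝ in Ioi 0, (t:ℂ) ^ ((1/2:ℂ) - 1) * (Real.log t * Real.exp (-t))) (1/2) :=
    Complex.hasDerivAt_GammaIntegral (by norm_num)
  have hIC : (∫ t : ℝ in Ioi 0, (t:ℂ) ^ ((1/2:ℂ) - 1) * (Real.log t * Real.exp (-t))) =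
      ((∫ t : ℝ in Ioi 0, t ^ (-(1/2) : ℝ) * (Real.log t * Real.exp (-t)) : ℝ) : ℂ) := by
    rw [cc, ← _root_.integral_ofReal]
    refine setIntegral_congr_fun measurableSet_Ioi fun t ht => ?_
    rw [← cc]
    exact ptwise ht
  have hEq : ∀ᶠ z in 𝓝 ((1:ℂ)/2), Complex.Gamma z = Complex.GammaIntegral z := by
    have hopen : IsOpen {z : ℂ | 0 < z.re} := isOpen_lt continuous_const Complex.continuous_re
    filter_upwards [hopen.mem_nhds (by norm_num : ((1:ℂ)/2) ∈ {z : ℂ | 0 < z.re})] with z hz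
    exact Complex.Gamma_eq_integral hz
  have hD2 : HasDerivAt Complex.Gamma
      (∫ t : ℝ in Ioi 0, (t:ℂ) ^ ((1/2:ℂ) - 1) * (Real.log t * Real.exp (-t))) (((1/2:ℝ):ℂ)) := by
    rw [show (((1/2:ℝ):ℂ)) = 1/2 by norm_num]
    exact hD.congr_of_eventuallyEq hEq
  have hD4 : HasDerivAt Real.Gamma
      (∫ t : ℝ in Ioi 0, (t:ℂ) ^ ((1/2:ℂ) - 1) * (Real.log t * Real.exp (-t))).re (1/2) :=
    hD2.real_of_complex
  have huniq := hD4.unique Real.hasDerivAt_Gamma_one_half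
  rw [hIC, Complex.ofReal_re] at huniq
  simpa using huniq


lemma L2int : IntegrableOn (fun t : ℝ => Real.exp (-t) * t ^ (-(1/2) : ℝ)) (Ioi 0) := by
  have h := Real.GammaIntegral_convergent (by norm_num : (0:ℝ) < 1/2)
  simp only [show (1:ℝ)/2 - 1 = -(1/2) by norm_num] at h
  exact h

lemma L3int : IntegrableOn (fun t : ℝ => Real.exp (-t) * t ^ ((1/2) : ℝ)) (Ioi 0) := by
  have h := Real.GammaIntegral_convergent (by norm_num : (0:ℝ) < 3/2)
  simp only [show (3:ℝ)/2 - 1 = 1/2 by norm_num] at h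
  exact h

lemma L2 : ∫ t : ℝ in Ioi 0, Real.exp (-t) * t ^ (-(1/2) : ℝ) = Real.sqrt π := by
  have h := (Real.Gamma_eq_integral (by norm_num : (0:ℝ) < 1/2)).symm
  simp only [show (1:ℝ)/2 - 1 = -(1/2) by norm_num] at h
  rw [h, Real.Gamma_one_half_eq]

lemma L3 : ∫ t : ℝ in Ioi 0, Real.exp (-t) * t ^ ((1/2) : ℝ) = Real.sqrt π / 2 := by
  have h := (Real.Gamma_eq_integral (by norm_num : (0:ℝ) < 3/2)).symm
  simp only [show (3:ℝ)/2 - 1 = 1/2 by norm_num] at h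
  rw [h, show (3:ℝ)/2 = 1/2 + 1 by norm_num, Real.Gamma_add_one (by norm_num),
    Real.Gamma_one_half_eq]
  ring


/-- The genial entropy of the half-Gaussian corner density `f(x) = (2/√π)·e^{-x²}` on `[0,∞)`
equals `(-1 + γ + ln π)/2`, where `γ` is Euler's constant. -/
theorem genial_entropy_half_gaussian :
    -1 - ∫ x in Set.Ici (0:ℝ),
        (2 / Real.sqrt π * Real.exp (-x ^ 2)) *
          Real.log (x * (2 / Real.sqrt π * Real.exp (-x ^ 2))) =
      (-1 + Real.eulerMascheroniConstant + Real.log π) / 2 := by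
  have hs : 0 < Real.sqrt π := Real.sqrt_pos.mpr Real.pi_pos
  set c : ℝ := 2 / Real.sqrt π with hc_def
  have hc : 0 < c := by positivity
  set g : ℝ → ℝ := fun t => (c/2) * (t ^ (-(1/2):ℝ) *
      ((Real.log t / 2 + Real.log c - t) * Real.exp (-t))) with hg_def
  rw [MeasureTheory.integral_Ici_eq_integral_Ioi]
  have hsub : (∫ x in Ioi (0:ℝ), (c * Real.exp (-x ^ 2)) *
        Real.log (x * (c * Real.exp (-x ^ 2)))) = ∫ t in Ioi (0:ℝ), g t := by
    rw [← integral_comp_rpow_Ioi_of_pos (g := g) two_pos]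
    refine setIntegral_congr_fun measurableSet_Ioi fun x hx => ?_
    have hx' : (0:ℝ) < x := hx
    have h2 : x ^ (2:ℝ) = x ^ (2:ℕ) := by
      rw [show ((2:ℝ)) = ((2:ℕ):ℝ) by norm_num, Real.rpow_natCast]
    have hinv : (x ^ (2:ℝ)) ^ (-(1/2):ℝ) = x⁻¹ := by
      rw [← Real.rpow_mul hx'.le]
      norm_num
      exact Real.rpow_neg_one x
    have hlog2 : Real.log (x ^ (2:ℝ)) = 2 * Real.log x := by
      rw [h2, Real.log_pow]; norm_num
    have hlogF : Real.log (x * (c * Real.exp (-x ^ 2)))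
        = Real.log x + Real.log c - x ^ 2 := by
      rw [Real.log_mul hx'.ne' (by positivity), Real.log_mul hc.ne' (Real.exp_ne_zero _),
        Real.log_exp]
      ring
    rw [smul_eq_mul, hg_def]
    simp only []
    rw [hinv, hlog2, hlogF, h2]
    have : x ^ ((2:ℝ) - 1) = x := by
      norm_num
    rw [this]
    field_simp
  rw [hsub]
  have hsplit : (∫ t in Ioi (0:ℝ), g t) =
      ∫ t in Ioi (0:ℝ), ((c/4) * (t ^ (-(1/2):ℝ) * (Real.log t * Real.exp (-t)))
        + ((c/2) * Real.log c) * (Real.exp (-t) * t ^ (-(1/2):ℝ))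
        - (c/2) * (Real.exp (-t) * t ^ ((1/2):ℝ))) := by
    refine setIntegral_congr_fun measurableSet_Ioi fun t ht => ?_
    have ht' : (0:ℝ) < t := ht
    have hpow : t ^ ((1/2):ℝ) = t ^ (-(1/2):ℝ) * t := by
      have h : t ^ (((-(1/2)) + 1):ℝ) = t ^ (-(1/2):ℝ) * t := by
        rw [Real.rpow_add ht', Real.rpow_one]
      rw [show ((-(1/2)+1):ℝ) = 1/2 by norm_num] at h
      exact h
    rw [hg_def]
    simp only []
    rw [hpow]
    ring
  rw [hsplit]
  rw [MeasureTheory.integral_sub (by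
        exact ((L1int.const_mul _).add (L2int.const_mul _)) )
      (L3int.const_mul _),
    MeasureTheory.integral_add (L1int.const_mul _) (L2int.const_mul _),
    integral_const_mul, integral_const_mul, integral_const_mul, L1, L2, L3]
  have hlogc : Real.log c = Real.log 2 - Real.log (Real.sqrt π) := by
    rw [hc_def, Real.log_div two_ne_zero hs.ne']
  have hlogpi : Real.log π = 2 * Real.log (Real.sqrt π) := by
    rw [Real.log_sqrt Real.pi_pos.le]; ring
  rw [hlogc, hlogpi, hc_def]
  field_simp
  ring
end

section
/- Let D = (d₁, ..., dₙ) be a sequence with d₁ ≥ d₂ ≥ ... ≥ dₙ > 0, let μ be its mean, and let D* = (d₁/μ, ..., dₙ/μ). Let f_{D*} be the step function on [0,1) taking the value dᵢ/μ on [(i-1)/n, i/n), and let L_{D*}(y) = (number of i with dᵢ/μ ≤ y)/n be the empirical CDF restricted to [0,∞). Then f_{D*} and 1 - L_{D*} are both corner densities and they have the same genial entropy. -/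
open MeasureTheory Real

/-- A corner density: a monotone decreasing nonnegative function `f : I → [0,∞)` where
`I ∪ {0}` is a connected interval contained in `[0,∞)` and `∫_I f = 1`. -/
def IsCornerDensity (I : Set ℝ) (f : ℝ → ℝ) : Prop :=
  I ⊆ Set.Ici 0 ∧ (insert (0:ℝ) I).OrdConnected ∧ AntitoneOn f I ∧
    (∀ x ∈ I, 0 ≤ f x) ∧ ∫ x in I, f x = 1

/-- The genial entropy of a corner density. -/
noncomputable def genialEntropy (I : Set ℝ) (f : ℝ → ℝ) : ℝ :=
  -1 - ∫ x in I, f x * Real.log (x * f x)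


lemma aux_ae_Ioc {f g : ℝ → ℝ} {c d : ℝ} (h : ∀ x ∈ Set.Ioo c d, f x = g x) :
    f =ᵐ[volume.restrict (Set.Ioc c d)] g := by
  rw [Measure.restrict_congr_set Ioo_ae_eq_Ioc.symm]
  filter_upwards [ae_restrict_mem measurableSet_Ioo] with x hx using h x hx

lemma aux_intervalIntegrable_of_eqOn {f g : ℝ → ℝ} {c d : ℝ} (hcd : c ≤ d)
    (hg : IntervalIntegrable g volume c d) (h : ∀ x ∈ Set.Ioo c d, f x = g x) :
    IntervalIntegrable f volume c d := by
  rw [intervalIntegrable_iff_integrableOn_Ioc_of_le hcd] at *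
  exact hg.congr (aux_ae_Ioc fun x hx => (h x hx).symm)

lemma aux_integral_of_eqOn {f g : ℝ → ℝ} {c d : ℝ} (hcd : c ≤ d)
    (h : ∀ x ∈ Set.Ioo c d, f x = g x) :
    ∫ x in c..d, f x = ∫ x in c..d, g x := by
  rw [intervalIntegral.integral_of_le hcd, intervalIntegral.integral_of_le hcd]
  exact integral_congr_ae (aux_ae_Ioc h)

lemma aux_intervalIntegrable_log {c d : ℝ} (hc : 0 ≤ c) (hcd : c ≤ d) :
    IntervalIntegrable Real.log volume c d := by
  rw [intervalIntegrable_iff_integrableOn_Ioc_of_le hcd]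
  have hbd : IntervalIntegrable (fun x : ℝ => 2 * x ^ (-(1/2) : ℝ) + d) volume c d :=
    ((intervalIntegral.intervalIntegrable_rpow' (by norm_num)).const_mul 2).add intervalIntegrable_const
  rw [intervalIntegrable_iff_integrableOn_Ioc_of_le hcd] at hbd
  refine hbd.mono' Real.measurable_log.aestronglyMeasurable ?_
  filter_upwards [ae_restrict_mem measurableSet_Ioc] with x hx
  have hx0 : 0 < x := lt_of_le_of_lt hc hx.1
  have h1 : -Real.log x ≤ 2 * x ^ (-(1/2) : ℝ) := by
    have : Real.log (x ^ (-(1/2) : ℝ)) ≤ x ^ (-(1/2) : ℝ) - 1 :=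
      Real.log_le_sub_one_of_pos (Real.rpow_pos_of_pos hx0 _)
    rw [Real.log_rpow hx0] at this
    nlinarith [Real.rpow_pos_of_pos hx0 (-(1/2) : ℝ)]
  have h2 : Real.log x ≤ d := by
    calc Real.log x ≤ x - 1 := Real.log_le_sub_one_of_pos hx0
    _ ≤ d := by linarith [hx.2]
  have h3 : (0:ℝ) < 2 * x ^ (-(1/2) : ℝ) := by positivity
  have h4 : (0:ℝ) ≤ d := le_trans hc hcd
  rw [Real.norm_eq_abs, abs_le]
  constructor <;> nlinarith

lemma aux_integral_log_zero {b : ℝ} (hb : 0 ≤ b) :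
    ∫ x in (0:ℝ)..b, Real.log x = b * Real.log b - b := by
  rcases eq_or_lt_of_le hb with h | h
  · simp [← h]
  · have := intervalIntegral.integral_eq_sub_of_hasDeriv_right_of_le hb
      (f := fun x => x * Real.log x - x) (f' := Real.log)
      (((Real.continuous_mul_log).sub continuous_id).continuousOn)
      (fun x hx => by
        have := ((Real.hasDerivAt_mul_log (ne_of_gt hx.1)).sub (hasDerivAt_id' x))
        exact this.hasDerivWithinAt.congr_deriv (by ring))
      (aux_intervalIntegrable_log le_rfl hb)
    simpa using this

lemma aux_integral_log {c d : ℝ} (hc : 0 ≤ c) (hcd : c ≤ d) :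
    ∫ x in c..d, Real.log x = (d * Real.log d - d) - (c * Real.log c - c) := by
  have h1 : IntervalIntegrable Real.log volume 0 c := aux_intervalIntegrable_log le_rfl hc
  have h2 : IntervalIntegrable Real.log volume c d := aux_intervalIntegrable_log hc hcd
  have := intervalIntegral.integral_add_adjacent_intervals h1 h2
  rw [aux_integral_log_zero hc, aux_integral_log_zero (le_trans hc hcd)] at this
  linarith

lemma aux_integral_mul_log {A c d : ℝ} (hA : 0 < A) (hc : 0 ≤ c) (hcd : c ≤ d) :
    ∫ x in c..d, A * Real.log (A * x)
      = ((A*d) * Real.log (A*d) - A*d) - ((A*c) * Real.log (A*c) - A*c) := by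
  rw [intervalIntegral.integral_const_mul, intervalIntegral.integral_comp_mul_left _ (ne_of_gt hA),
    aux_integral_log (by positivity) (by nlinarith)]
  rw [smul_eq_mul, ← mul_assoc, mul_inv_cancel₀ (ne_of_gt hA), one_mul]

lemma aux_intervalIntegrable_mul_log {A c d : ℝ} (hA : 0 < A) (hc : 0 ≤ c) (hcd : c ≤ d) :
    IntervalIntegrable (fun x => A * Real.log (A * x)) volume c d := by
  refine aux_intervalIntegrable_of_eqOn (g := fun x => A * (Real.log A + Real.log x)) hcd
    (((intervalIntegrable_const (c := Real.log A)).add (aux_intervalIntegrable_log hc hcd)).const_mul A)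
    (fun x hx => ?_)
  have hx0 : 0 < x := lt_of_le_of_lt hc hx.1
  rw [Real.log_mul (ne_of_gt hA) (ne_of_gt hx0)]

lemma aux_setIntegral_Ico_eq_intervalIntegral {f : ℝ → ℝ} {c d : ℝ} (h : c ≤ d) :
    ∫ x in Set.Ico c d, f x = ∫ x in c..d, f x := by
  rw [intervalIntegral.integral_of_le h, integral_Ico_eq_integral_Ioo,
    ← integral_Ioc_eq_integral_Ioo]

lemma aux_integrableOn_Ico {f : ℝ → ℝ} {c d : ℝ} (h : c ≤ d)
    (hf : IntervalIntegrable f volume c d) : IntegrableOn f (Set.Ico c d) := by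
  rw [intervalIntegrable_iff_integrableOn_Ioc_of_le h] at hf
  rw [IntegrableOn, Measure.restrict_congr_set Ico_ae_eq_Ioc]
  exact hf

lemma aux_abel (b : ℕ → ℝ) (c : ℝ) (N : ℕ) :
    ∑ k ∈ Finset.range N, ((b (k+1) - b (k+2)) * (((k:ℝ)+1) * c))
      = (∑ k ∈ Finset.range N, b (k+1) * c) - (N:ℝ) * b (N+1) * c := by
  induction N with
  | zero => simp
  | succ m ih =>
    rw [Finset.sum_range_succ, ih, Finset.sum_range_succ (fun k => b (k+1) * c)]
    have e : m + 1 + 1 = m + 2 := by omega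
    rw [e]
    push_cast
    ring

/-- Let `d 1 ≥ d 2 ≥ ... ≥ d n > 0` with mean `μ`. Then the step function `f_{D*}` on
`[0,1)` taking the value `d i / μ` on `[(i-1)/n, i/n)`, and `1 - L_{D*}` on `[0,∞)`
(where `L_{D*}` is the empirical CDF of the normalized data), are both corner densities
with the same genial entropy. -/
theorem step_density_and_ecdf_same_genial_entropy
    (n : ℕ) (hn : 0 < n) (d : ℕ → ℝ)
    (hmono : ∀ i, 1 ≤ i → i < n → d (i + 1) ≤ d i)
    (hpos : ∀ i, 1 ≤ i → i ≤ n → 0 < d i)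
    (μ : ℝ) (hμ : μ = (∑ i ∈ Finset.Icc 1 n, d i) / n)
    (fD : ℝ → ℝ) (hfD : ∀ x ∈ Set.Ico (0:ℝ) 1, fD x = d (⌊x * n⌋₊ + 1) / μ)
    (L : ℝ → ℝ)
    (hL : ∀ y ∈ Set.Ici (0:ℝ),
      L y = ((Finset.Icc 1 n).filter (fun i => d i / μ ≤ y)).card / n) :
    IsCornerDensity (Set.Ico 0 1) fD ∧
      IsCornerDensity (Set.Ici 0) (fun y => 1 - L y) ∧
      genialEntropy (Set.Ico 0 1) fD = genialEntropy (Set.Ici 0) (fun y => 1 - L y) := by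
  classical
  have hnR : (0:ℝ) < n := by exact_mod_cast hn
  have hsum_pos : (0:ℝ) < ∑ i ∈ Finset.Icc 1 n, d i :=
    Finset.sum_pos (fun i hi => hpos i (Finset.mem_Icc.mp hi).1 (Finset.mem_Icc.mp hi).2)
      ⟨1, Finset.mem_Icc.mpr ⟨le_rfl, hn⟩⟩
  have hμpos : 0 < μ := by rw [hμ]; positivity
  set a : ℕ → ℝ := fun i => if 1 ≤ i ∧ i ≤ n then d i / μ else 0 with ha_def
  have ha_eq : ∀ i, 1 ≤ i → i ≤ n → a i = d i / μ := by
    intro i h1 h2; simp only [ha_def]; rw [if_pos ⟨h1, h2⟩]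
  have ha_zero : ∀ i, n < i → a i = 0 := by
    intro i h; simp only [ha_def]; rw [if_neg (fun hc => absurd hc.2 (not_le.mpr h))]
  have hapos : ∀ i, 1 ≤ i → i ≤ n → 0 < a i := fun i h1 h2 => by
    rw [ha_eq i h1 h2]; exact div_pos (hpos i h1 h2) hμpos
  have hanneg : ∀ i, 0 ≤ a i := by
    intro i
    by_cases h : 1 ≤ i ∧ i ≤ n
    · exact le_of_lt (hapos i h.1 h.2)
    · simp only [ha_def]; rw [if_neg h]
  have hd_anti : ∀ j i, 1 ≤ i → i ≤ j → j ≤ n → d j ≤ d i := by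
    intro j
    induction j with
    | zero => intro i h1 hij _; exact absurd (h1.trans hij) (by omega)
    | succ k ih =>
      intro i h1 hij hkn
      rcases eq_or_lt_of_le hij with rfl | h
      · exact le_rfl
      · have hik : i ≤ k := by omega
        exact (hmono k (by omega) (by omega)).trans (ih i h1 hik (by omega))
  have ha_anti : ∀ i j, 1 ≤ i → i ≤ j → a j ≤ a i := by
    intro i j h1 hij
    by_cases hj : j ≤ n
    · rw [ha_eq i h1 (le_trans hij hj), ha_eq j (le_trans h1 hij) hj]
      exact (div_le_div_iff_of_pos_right hμpos).mpr (hd_anti j i h1 hij hj)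
    · rw [ha_zero j (not_le.mp hj)]; exact hanneg i
  have hfDa : ∀ x, 0 ≤ x → x < 1 → fD x = a (⌊x * n⌋₊ + 1) := by
    intro x h0 h1
    have hfl : ⌊x * n⌋₊ < n := by
      rw [Nat.floor_lt (by positivity)]
      nlinarith
    rw [hfD x ⟨h0, h1⟩, ha_eq _ (by omega) (by omega)]
  -- partition P for [0,1]
  set P : ℕ → ℝ := fun k => (k:ℝ)/(n:ℝ) with hP_def
  have hPle : ∀ k : ℕ, P k ≤ P (k+1) := by
    intro k; simp only [hP_def]
    rw [div_le_div_iff_of_pos_right hnR]; push_cast; linarith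
  have hPnn : ∀ k : ℕ, 0 ≤ P k := by
    intro k; simp only [hP_def]; positivity
  have hstep1 : ∀ k, k < n → ∀ x ∈ Set.Ioo (P k) (P (k+1)), fD x = a (k+1) := by
    intro k hk x hx
    obtain ⟨hx1, hx2⟩ := hx
    simp only [hP_def] at hx1 hx2
    have h0 : 0 ≤ x := le_trans (by positivity) hx1.le
    have hkx : (k:ℝ) ≤ x * n := by rw [div_lt_iff₀ hnR] at hx1; linarith
    have hkx2 : x * n < (k:ℝ) + 1 := by
      rw [lt_div_iff₀ hnR] at hx2; push_cast at hx2; linarith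
    have h1 : x < 1 := by
      have hkn : ((k:ℝ)+1) ≤ n := by exact_mod_cast Nat.succ_le_of_lt hk
      rw [lt_div_iff₀ hnR] at hx2
      push_cast at hx2
      nlinarith
    rw [hfDa x h0 h1]
    have hfleq : ⌊x * n⌋₊ = k := (Nat.floor_eq_iff (by positivity)).mpr ⟨hkx, by push_cast; linarith⟩
    rw [hfleq]
  -- L lemmas
  have hfilter : ∀ j, 1 ≤ j → j ≤ n → ∀ y : ℝ, a (j+1) ≤ y → y < a j →
      (Finset.Icc 1 n).filter (fun i => d i / μ ≤ y) = Finset.Icc (j+1) n := by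
    intro j h1 hjn y hy1 hy2
    ext i
    simp only [Finset.mem_filter, Finset.mem_Icc]
    constructor
    · rintro ⟨⟨hi1, hin⟩, hle⟩
      refine ⟨?_, hin⟩
      by_contra hc
      have hij : i ≤ j := by omega
      have hja : a j ≤ a i := ha_anti i j hi1 hij
      rw [ha_eq i hi1 hin] at hja
      linarith
    · rintro ⟨hi1, hin⟩
      have hi1' : 1 ≤ i := by omega
      refine ⟨⟨hi1', hin⟩, ?_⟩
      have hai : a i ≤ a (j+1) := ha_anti (j+1) i (by omega) hi1
      rw [ha_eq i hi1' hin] at hai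
      linarith
  have hLval : ∀ j, 1 ≤ j → j ≤ n → ∀ y : ℝ, 0 ≤ y → a (j+1) ≤ y → y < a j →
      1 - L y = ((j:ℕ):ℝ)/n := by
    intro j h1 hjn y h0 hy1 hy2
    rw [hL y h0, hfilter j h1 hjn y hy1 hy2, Nat.card_Icc]
    have he : (n + 1 - (j+1)) = n - j := by omega
    rw [he, Nat.cast_sub hjn]
    field_simp
    ring
  have hLtop : ∀ y : ℝ, a 1 ≤ y → 1 - L y = 0 := by
    intro y hy
    have h0 : (0:ℝ) ≤ y := le_trans (hapos 1 le_rfl hn).le hy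
    rw [hL y h0]
    have hfe : (Finset.Icc 1 n).filter (fun i => d i / μ ≤ y) = Finset.Icc 1 n := by
      rw [Finset.filter_eq_self]
      intro i hi
      obtain ⟨hi1, hin⟩ := Finset.mem_Icc.mp hi
      have hai : a i ≤ a 1 := ha_anti 1 i le_rfl hi1
      rw [ha_eq i hi1 hin] at hai
      linarith
    rw [hfe, Nat.card_Icc]
    have : (n + 1 - 1) = n := by omega
    rw [this, div_self hnR.ne']
    ring
  have hLmono : ∀ y z : ℝ, 0 ≤ y → y ≤ z → L y ≤ L z := by
    intro y z h0 hyz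
    rw [hL y h0, hL z (h0.trans hyz)]
    apply div_le_div_of_nonneg_right ?_ hnR.le
    exact_mod_cast Finset.card_le_card
      (Finset.monotone_filter_right _ (fun i _ hi => le_trans hi hyz))
  have hLle1 : ∀ y : ℝ, 0 ≤ y → L y ≤ 1 := by
    intro y h0
    rw [hL y h0, div_le_one hnR]
    have := Finset.card_filter_le (Finset.Icc 1 n) (fun i => d i / μ ≤ y)
    rw [Nat.card_Icc] at this
    exact_mod_cast by omega
  -- partition Q for [0, a 1]
  set Q : ℕ → ℝ := fun k => a (n + 1 - k) with hQ_def
  have hQ0 : Q 0 = 0 := by simp only [hQ_def]; exact ha_zero (n+1-0) (by omega)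
  have hQn : Q n = a 1 := by simp only [hQ_def]; congr 1; omega
  have hQnn : ∀ k, 0 ≤ Q k := fun k => hanneg _
  have hQsucc : ∀ k, k < n → Q (k+1) = a (n - k) := by
    intro k hk; simp only [hQ_def]; congr 1; omega
  have hQle : ∀ k, k < n → Q k ≤ Q (k+1) := by
    intro k hk
    rw [hQsucc k hk]
    have he : n + 1 - k = (n - k) + 1 := by omega
    simp only [hQ_def]
    rw [he]
    exact ha_anti (n-k) ((n-k)+1) (by omega) (by omega)
  have hgval : ∀ k, k < n → ∀ y ∈ Set.Ioo (Q k) (Q (k+1)), 1 - L y = ((n-k:ℕ):ℝ)/n := by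
    intro k hk y hy
    obtain ⟨hy1, hy2⟩ := hy
    rw [hQsucc k hk] at hy2
    simp only [hQ_def] at hy1
    have h0 : (0:ℝ) ≤ y := le_trans (hanneg _) hy1.le
    have he : n + 1 - k = (n - k) + 1 := by omega
    rw [he] at hy1
    exact hLval (n-k) (by omega) (by omega) y h0 hy1.le hy2
  -- integral of fD
  have hIco01 : Set.Ico (0:ℝ) 1 = Set.Ico (P 0) (P n) := by
    simp only [hP_def, Nat.cast_zero, zero_div, div_self hnR.ne']
  have hP0n : P 0 ≤ P n := by
    simp only [hP_def, Nat.cast_zero, zero_div]; positivity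
  have hNint : ∀ k, k < n → IntervalIntegrable fD volume (P k) (P (k+1)) := by
    intro k hk
    exact aux_intervalIntegrable_of_eqOn (hPle k) (intervalIntegrable_const (c := a (k+1)))
      (fun x hx => hstep1 k hk x hx)
  have hsum_a : ∑ k ∈ Finset.range n, a (k+1) = (n:ℝ) := by
    have h1 : ∀ k ∈ Finset.range n, a (k+1) = d (k+1) / μ := fun k hk =>
      ha_eq _ (by omega) (Finset.mem_range.mp hk)
    rw [Finset.sum_congr rfl h1, ← Finset.sum_div]
    have h2 : ∑ k ∈ Finset.range n, d (k+1) = ∑ i ∈ Finset.Icc 1 n, d i := by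
      rw [← Finset.Ico_add_one_right_eq_Icc, Finset.sum_Ico_eq_sum_range]
      refine Finset.sum_congr (by congr 1) fun k _ => by rw [Nat.add_comm]
    rw [h2, hμ]
    field_simp
  have hN1 : ∫ x in Set.Ico (0:ℝ) 1, fD x = 1 := by
    rw [hIco01, aux_setIntegral_Ico_eq_intervalIntegral hP0n,
      ← intervalIntegral.sum_integral_adjacent_intervals hNint]
    have heval : ∀ k ∈ Finset.range n, (∫ x in P k..P (k+1), fD x) = a (k+1) * (1/(n:ℝ)) := by
      intro k hk
      rw [aux_integral_of_eqOn (hPle k) (fun x hx => hstep1 k (Finset.mem_range.mp hk) x hx),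
        intervalIntegral.integral_const, smul_eq_mul]
      have he : P (k+1) - P k = 1/(n:ℝ) := by simp only [hP_def]; push_cast; ring
      rw [he]; ring
    rw [Finset.sum_congr rfl heval, ← Finset.sum_mul, hsum_a]
    field_simp
  -- integral of (1 - L)
  have ha1pos : (0:ℝ) < a 1 := hapos 1 le_rfl hn
  have hsplit : Set.Ici (0:ℝ) = Set.Ico (0:ℝ) (a 1) ∪ Set.Ici (a 1) :=
    (Set.Ico_union_Ici_eq_Ici ha1pos.le).symm
  have hdisj : Disjoint (Set.Ico (0:ℝ) (a 1)) (Set.Ici (a 1)) := by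
    rw [Set.disjoint_left]
    intro x hx hx'
    exact absurd hx.2 (not_lt.mpr hx')
  have hQ0n : Q 0 ≤ Q n := by rw [hQ0, hQn]; exact ha1pos.le
  have hGint : ∀ k, k < n → IntervalIntegrable (fun y => 1 - L y) volume (Q k) (Q (k+1)) := by
    intro k hk
    exact aux_intervalIntegrable_of_eqOn (hQle k hk)
      (intervalIntegrable_const (c := ((n-k:ℕ):ℝ)/n)) (fun y hy => hgval k hk y hy)
  have hGchain : IntervalIntegrable (fun y => 1 - L y) volume 0 (a 1) := by
    have := IntervalIntegrable.trans_iterate (a := Q) (fun k hk => hGint k hk)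
    rwa [hQ0, hQn] at this
  have hGzero : IntegrableOn (fun y => 1 - L y) (Set.Ici (a 1)) := by
    refine (integrable_zero _ _ _).congr ?_
    filter_upwards [ae_restrict_mem measurableSet_Ici] with y hy
    exact (hLtop y hy).symm
  have hGzv : ∫ y in Set.Ici (a 1), (1 - L y) = 0 := by
    rw [setIntegral_congr_fun (g := fun _ => (0:ℝ)) measurableSet_Ici (fun y hy => hLtop y hy)]
    simp
  have hN2 : ∫ y in Set.Ici (0:ℝ), (1 - L y) = 1 := by
    rw [hsplit, setIntegral_union hdisj measurableSet_Ici
      (aux_integrableOn_Ico ha1pos.le hGchain) hGzero, hGzv, add_zero]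
    rw [show Set.Ico (0:ℝ) (a 1) = Set.Ico (Q 0) (Q n) by rw [hQ0, hQn],
      aux_setIntegral_Ico_eq_intervalIntegral hQ0n,
      ← intervalIntegral.sum_integral_adjacent_intervals hGint]
    have heval : ∀ k ∈ Finset.range n, (∫ y in Q k..Q (k+1), (1 - L y))
        = (Q (k+1) - Q k) * (((n-k:ℕ):ℝ)/n) := by
      intro k hk
      rw [aux_integral_of_eqOn (hQle k (Finset.mem_range.mp hk))
        (fun y hy => hgval k (Finset.mem_range.mp hk) y hy),
        intervalIntegral.integral_const, smul_eq_mul]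
    rw [Finset.sum_congr rfl heval, ← Finset.sum_range_reflect]
    have hterm : ∀ k ∈ Finset.range n,
        (Q (n-1-k+1) - Q (n-1-k)) * (((n-(n-1-k):ℕ):ℝ)/n)
        = (a (k+1) - a (k+2)) * (((k:ℝ)+1) * (1/(n:ℝ))) := by
      intro k hk
      have hk' := Finset.mem_range.mp hk
      have e1 : n - 1 - k + 1 = n - k := by omega
      have e2 : n + 1 - (n - k) = k + 1 := by omega
      have e3 : n + 1 - (n - 1 - k) = k + 2 := by omega
      have e4 : n - (n - 1 - k) = k + 1 := by omega
      simp only [hQ_def, e1, e2, e3, e4]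
      push_cast
      ring
    rw [Finset.sum_congr rfl hterm, aux_abel, ha_zero (n+1) (by omega), ← Finset.sum_mul, hsum_a]
    field_simp
    norm_num
  -- entropy integral for fD
  have hstep1' : ∀ k, k < n → ∀ x ∈ Set.Ioo (P k) (P (k+1)),
      fD x * Real.log (x * fD x) = a (k+1) * Real.log (a (k+1) * x) := by
    intro k hk x hx
    rw [hstep1 k hk x hx, mul_comm x (a (k+1))]
  have hE1int : ∀ k, k < n → IntervalIntegrable
      (fun x => fD x * Real.log (x * fD x)) volume (P k) (P (k+1)) := by
    intro k hk
    exact aux_intervalIntegrable_of_eqOn (hPle k)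
      (aux_intervalIntegrable_mul_log (hapos (k+1) (by omega) hk) (hPnn k) (hPle k))
      (hstep1' k hk)
  have hE1 : ∫ x in Set.Ico (0:ℝ) 1, fD x * Real.log (x * fD x)
      = ∑ k ∈ Finset.range n,
        ((a (k+1) * P (k+1)) * Real.log (a (k+1) * P (k+1)) - a (k+1) * P (k+1)
          - ((a (k+1) * P k) * Real.log (a (k+1) * P k) - a (k+1) * P k)) := by
    rw [hIco01, aux_setIntegral_Ico_eq_intervalIntegral hP0n,
      ← intervalIntegral.sum_integral_adjacent_intervals hE1int]
    refine Finset.sum_congr rfl fun k hk => ?_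
    rw [aux_integral_of_eqOn (hPle k) (hstep1' k (Finset.mem_range.mp hk)),
      aux_integral_mul_log (hapos (k+1) (by omega) (Finset.mem_range.mp hk)) (hPnn k) (hPle k)]
  -- entropy integral for 1 - L
  have hstep2' : ∀ k, k < n → ∀ y ∈ Set.Ioo (Q k) (Q (k+1)),
      (1 - L y) * Real.log (y * (1 - L y))
        = (((n-k:ℕ):ℝ)/n) * Real.log ((((n-k:ℕ):ℝ)/n) * y) := by
    intro k hk y hy
    rw [hgval k hk y hy, mul_comm y]
  have hANpos : ∀ k, k < n → (0:ℝ) < ((n-k:ℕ):ℝ)/n := by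
    intro k hk
    have h1 : (0:ℕ) < n - k := by omega
    have h2 : (0:ℝ) < ((n-k:ℕ):ℝ) := by exact_mod_cast h1
    positivity
  have hE2int : ∀ k, k < n → IntervalIntegrable
      (fun y => (1 - L y) * Real.log (y * (1 - L y))) volume (Q k) (Q (k+1)) := fun k hk =>
    aux_intervalIntegrable_of_eqOn (hQle k hk)
      (aux_intervalIntegrable_mul_log (hANpos k hk) (hQnn k) (hQle k hk)) (hstep2' k hk)
  have hE2chain : IntervalIntegrable
      (fun y => (1 - L y) * Real.log (y * (1 - L y))) volume 0 (a 1) := by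
    have := IntervalIntegrable.trans_iterate (a := Q) (fun k hk => hE2int k hk)
    rwa [hQ0, hQn] at this
  have hE2zero : IntegrableOn
      (fun y => (1 - L y) * Real.log (y * (1 - L y))) (Set.Ici (a 1)) := by
    refine (integrable_zero _ _ _).congr ?_
    filter_upwards [ae_restrict_mem measurableSet_Ici] with y hy
    rw [hLtop y hy]
    simp
  have hE2zv : ∫ y in Set.Ici (a 1), (1 - L y) * Real.log (y * (1 - L y)) = 0 := by
    rw [setIntegral_congr_fun (g := fun _ => (0:ℝ)) measurableSet_Ici
      (fun y hy => by rw [hLtop y hy]; simp)]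
    simp
  have hE2 : ∫ y in Set.Ici (0:ℝ), (1 - L y) * Real.log (y * (1 - L y))
      = ∑ k ∈ Finset.range n,
        ((a (k+1) * (((k:ℝ)+1)/n)) * Real.log (a (k+1) * (((k:ℝ)+1)/n))
            - a (k+1) * (((k:ℝ)+1)/n)
          - ((a (k+2) * (((k:ℝ)+1)/n)) * Real.log (a (k+2) * (((k:ℝ)+1)/n))
            - a (k+2) * (((k:ℝ)+1)/n))) := by
    rw [hsplit, setIntegral_union hdisj measurableSet_Ici
      (aux_integrableOn_Ico ha1pos.le hE2chain) hE2zero, hE2zv, add_zero]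
    rw [show Set.Ico (0:ℝ) (a 1) = Set.Ico (Q 0) (Q n) by rw [hQ0, hQn],
      aux_setIntegral_Ico_eq_intervalIntegral hQ0n,
      ← intervalIntegral.sum_integral_adjacent_intervals hE2int]
    have heval : ∀ k ∈ Finset.range n,
        (∫ y in Q k..Q (k+1), (1 - L y) * Real.log (y * (1 - L y)))
        = (((((n-k:ℕ):ℝ)/n) * Q (k+1)) * Real.log ((((n-k:ℕ):ℝ)/n) * Q (k+1))
            - (((n-k:ℕ):ℝ)/n) * Q (k+1)
          - (((((n-k:ℕ):ℝ)/n) * Q k) * Real.log ((((n-k:ℕ):ℝ)/n) * Q k)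
            - (((n-k:ℕ):ℝ)/n) * Q k)) := by
      intro k hk
      have hk' := Finset.mem_range.mp hk
      rw [aux_integral_of_eqOn (hQle k hk') (hstep2' k hk'),
        aux_integral_mul_log (hANpos k hk') (hQnn k) (hQle k hk')]
    rw [Finset.sum_congr rfl heval, ← Finset.sum_range_reflect]
    refine Finset.sum_congr rfl fun k hk => ?_
    have hk' := Finset.mem_range.mp hk
    have e1 : n - 1 - k + 1 = n - k := by omega
    have e2 : n + 1 - (n - k) = k + 1 := by omega
    have e3 : n + 1 - (n - 1 - k) = k + 2 := by omega
    have e4 : n - (n - 1 - k) = k + 1 := by omega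
    simp only [hQ_def, e1, e2, e3, e4]
    have ec : ((k+1:ℕ):ℝ) = (k:ℝ)+1 := by push_cast; ring
    rw [ec, mul_comm (((k:ℝ)+1)/(n:ℝ)) (a (k+1)), mul_comm (((k:ℝ)+1)/(n:ℝ)) (a (k+2))]
  -- the two sums are equal
  set F : ℕ → ℝ := fun j =>
    (a (j+1) * ((j:ℝ)/(n:ℝ))) * Real.log (a (j+1) * ((j:ℝ)/(n:ℝ))) - a (j+1) * ((j:ℝ)/(n:ℝ))
    with hF_def
  have hEeq : (∑ k ∈ Finset.range n,
        ((a (k+1) * P (k+1)) * Real.log (a (k+1) * P (k+1)) - a (k+1) * P (k+1)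
          - ((a (k+1) * P k) * Real.log (a (k+1) * P k) - a (k+1) * P k)))
      = ∑ k ∈ Finset.range n,
        ((a (k+1) * (((k:ℝ)+1)/n)) * Real.log (a (k+1) * (((k:ℝ)+1)/n))
            - a (k+1) * (((k:ℝ)+1)/n)
          - ((a (k+2) * (((k:ℝ)+1)/n)) * Real.log (a (k+2) * (((k:ℝ)+1)/n))
            - a (k+2) * (((k:ℝ)+1)/n))) := by
    rw [← sub_eq_zero, ← Finset.sum_sub_distrib]
    have hterm : ∀ k ∈ Finset.range n,
        ((a (k+1) * P (k+1)) * Real.log (a (k+1) * P (k+1)) - a (k+1) * P (k+1)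
          - ((a (k+1) * P k) * Real.log (a (k+1) * P k) - a (k+1) * P k))
        - ((a (k+1) * (((k:ℝ)+1)/n)) * Real.log (a (k+1) * (((k:ℝ)+1)/n))
            - a (k+1) * (((k:ℝ)+1)/n)
          - ((a (k+2) * (((k:ℝ)+1)/n)) * Real.log (a (k+2) * (((k:ℝ)+1)/n))
            - a (k+2) * (((k:ℝ)+1)/n)))
        = F (k+1) - F k := by
      intro k hk
      simp only [hF_def, hP_def]
      have e5 : k+1+1 = k+2 := rfl
      rw [e5]
      push_cast
      ring
    rw [Finset.sum_congr rfl hterm, Finset.sum_range_sub F n]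
    simp only [hF_def]
    rw [ha_zero (n+1) (by omega)]
    norm_num
  refine ⟨⟨fun x hx => hx.1, ?_, ?_, ?_, hN1⟩,
    ⟨fun y hy => hy, ?_, ?_, ?_, hN2⟩, ?_⟩
  · rw [Set.insert_eq_self.mpr (show (0:ℝ) ∈ Set.Ico 0 1 from ⟨le_rfl, one_pos⟩)]
    exact Set.ordConnected_Ico
  · intro x hx y hy hxy
    rw [hfDa x hx.1 hx.2, hfDa y hy.1 hy.2]
    exact ha_anti _ _ (by omega)
      (Nat.succ_le_succ (Nat.floor_le_floor (mul_le_mul_of_nonneg_right hxy hnR.le)))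
  · intro x hx
    rw [hfDa x hx.1 hx.2]
    exact hanneg _
  · rw [Set.insert_eq_self.mpr (Set.self_mem_Ici)]
    exact Set.ordConnected_Ici
  · intro y hy z hz hyz
    simp only
    exact sub_le_sub_left (hLmono y z hy hyz) 1
  · intro y hy
    simp only
    linarith [hLle1 y hy]
  · simp only [genialEntropy]
    rw [hE1, hE2, hEeq]
end

section
/- Suppose y₁ ≥ y₂ ≥ ... ≥ yₙ ≥ 0 and 0 = t₀ ≤ t₁ ≤ ... ≤ tₙ. Let A = ∑_{i=1}^n yᵢ(tᵢ - tᵢ₋₁). Then ∑_{i=1}^n (tᵢ₋₁yᵢ·ln(tᵢ₋₁yᵢ) - tᵢyᵢ·ln(tᵢyᵢ)) ≥ -A·ln A. -/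
open Finset Real

/-- Shift lemma: for `φ x = x * log x` convex on `[0,∞)`, translating an interval
to the right increases the increment of `φ`. -/
lemma mul_log_shift {a b c d : ℝ} (ha : 0 ≤ a) (hc : 0 ≤ c) (hab : a ≤ b)
    (hbd : b ≤ d) (hlen : b - a = d - c) :
    b * Real.log b - a * Real.log a ≤ d * Real.log d - c * Real.log c := by
  have hcd : c ≤ d := by linarith
  have hac : a ≤ c := by linarith
  rcases eq_or_lt_of_le hab with h | h
  · have hcd2 : c = d := by linarith
    rw [← h, ← hcd2]; simp
  · have hcd' : c < d := by linarith
    have had : a < d := lt_of_lt_of_le h hbd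
    have hφ := Real.convexOn_mul_log
    have hb0 : (0:ℝ) ≤ b := le_trans ha hab
    have hd0 : (0:ℝ) ≤ d := le_trans hc hcd
    set φ : ℝ → ℝ := fun x ↦ x * Real.log x with hφdef
    have h1 : (φ b - φ a) / (b - a) ≤ (φ d - φ a) / (d - a) :=
      hφ.secant_mono (Set.mem_Ici.2 ha) (Set.mem_Ici.2 hb0) (Set.mem_Ici.2 hd0)
        (ne_of_gt h) (ne_of_gt had) hbd
    have h2 : (φ a - φ d) / (a - d) ≤ (φ c - φ d) / (c - d) :=
      hφ.secant_mono (Set.mem_Ici.2 hd0) (Set.mem_Ici.2 ha) (Set.mem_Ici.2 hc)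
        (ne_of_lt had) (ne_of_lt hcd') hac
    have h3 : (φ a - φ d) / (a - d) = (φ d - φ a) / (d - a) := by
      rw [← neg_div_neg_eq]; ring_nf
    have h4 : (φ b - φ a) / (b - a) ≤ (φ c - φ d) / (c - d) := by
      rw [h3] at h2; linarith
    have hba : (0:ℝ) < b - a := by linarith
    have h5 : (φ c - φ d) / (c - d) = (φ d - φ c) / (d - c) := by
      rw [← neg_div_neg_eq]; ring_nf
    rw [h5] at h4
    have h6 := (div_le_div_iff₀ hba (by linarith : (0:ℝ) < d - c)).1 h4
    have hdc : d - c = b - a := hlen.symm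
    rw [hdc] at h6
    have h7 : φ b - φ a ≤ φ d - φ c := le_of_mul_le_mul_right h6 hba
    simpa [hφdef] using h7

/-- Suppose `y₁ ≥ y₂ ≥ ... ≥ yₙ ≥ 0` and `0 = t₀ ≤ t₁ ≤ ... ≤ tₙ`, and let
`A = ∑ yᵢ (tᵢ - tᵢ₋₁)`.  Then
`∑ (tᵢ₋₁ yᵢ ln(tᵢ₋₁ yᵢ) - tᵢ yᵢ ln(tᵢ yᵢ)) ≥ -A ln A`
(with the convention `0 ln 0 = 0`, which holds since `Real.log 0 = 0`). -/
theorem step_entropy_inequality (n : ℕ) (y t : ℕ → ℝ)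
    (hy_mono : ∀ i, 1 ≤ i → i < n → y (i + 1) ≤ y i)
    (hy_nonneg : ∀ i, 1 ≤ i → i ≤ n → 0 ≤ y i)
    (ht0 : t 0 = 0)
    (ht_mono : ∀ i, i < n → t i ≤ t (i + 1))
    (A : ℝ) (hA : A = ∑ i ∈ Finset.Icc 1 n, y i * (t i - t (i - 1))) :
    -A * Real.log A ≤
      ∑ i ∈ Finset.Icc 1 n,
        (t (i - 1) * y i * Real.log (t (i - 1) * y i) -
          t i * y i * Real.log (t i * y i)) := by
  have htmono : ∀ i j, i ≤ j → j ≤ n → t i ≤ t j := by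
    intro i j hij hjn
    induction j with
    | zero => interval_cases i; exact le_refl _
    | succ k ih =>
      rcases Nat.lt_or_ge i (k+1) with h | h
      · exact le_trans (ih (Nat.lt_succ_iff.1 h) (by omega)) (ht_mono k (by omega))
      · have : i = k + 1 := by omega
        rw [this]
  have htnn : ∀ i, i ≤ n → 0 ≤ t i := fun i hi => ht0 ▸ htmono 0 i (Nat.zero_le i) hi
  have hymono : ∀ i j, 1 ≤ i → i ≤ j → j ≤ n → y j ≤ y i := by
    intro i j h1 hij hjn
    induction j with
    | zero => omega
    | succ k ih =>
      rcases Nat.lt_or_ge i (k+1) with h | h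
      · exact le_trans (hy_mono k (by omega) (by omega)) (ih (by omega) (by omega))
      · have : i = k + 1 := by omega
        rw [this]
  have hstep : ∀ i, 1 ≤ i → i ≤ n → t (i - 1) ≤ t i := by
    intro i h1 hi
    have heq : i - 1 + 1 = i := by omega
    have h2 := ht_mono (i - 1) (by omega)
    rwa [heq] at h2
  have htel : ∀ m, m ≤ n → ∑ i ∈ Finset.Icc 1 m, (t i - t (i - 1)) = t m := by
    intro m hm
    induction m with
    | zero => simp [ht0]
    | succ k ih =>
      rw [Finset.sum_Icc_succ_top (by omega : 1 ≤ k + 1), ih (by omega)]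
      simp
  have hSnn : ∀ m, m ≤ n → 0 ≤ ∑ i ∈ Finset.Icc 1 m, y i * (t i - t (i - 1)) := by
    intro m hm
    apply Finset.sum_nonneg
    intro i hi
    simp only [Finset.mem_Icc] at hi
    exact mul_nonneg (hy_nonneg i hi.1 (by omega))
      (by linarith [hstep i hi.1 (by omega)])
  have hkey : ∀ m, 1 ≤ m → m ≤ n →
      t m * y m ≤ ∑ i ∈ Finset.Icc 1 m, y i * (t i - t (i - 1)) := by
    intro m h1 hm
    have heq : t m * y m = ∑ i ∈ Finset.Icc 1 m, y m * (t i - t (i - 1)) := by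
      rw [← Finset.mul_sum, htel m hm]; ring
    rw [heq]
    apply Finset.sum_le_sum
    intro i hi
    simp only [Finset.mem_Icc] at hi
    exact mul_le_mul_of_nonneg_right (hymono i m hi.1 hi.2 hm)
      (by linarith [hstep i hi.1 (by omega)])
  have main : ∀ m, m ≤ n →
      -(∑ i ∈ Finset.Icc 1 m, y i * (t i - t (i - 1))) *
          Real.log (∑ i ∈ Finset.Icc 1 m, y i * (t i - t (i - 1))) ≤
        ∑ i ∈ Finset.Icc 1 m,
          (t (i - 1) * y i * Real.log (t (i - 1) * y i) -
            t i * y i * Real.log (t i * y i)) := by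
    intro m hm
    induction m with
    | zero => simp
    | succ k ih =>
      have hkn : k ≤ n := by omega
      have hy1 : 0 ≤ y (k+1) := hy_nonneg (k+1) (by omega) hm
      have htk : 0 ≤ t k := htnn k hkn
      have htk1 : t k ≤ t (k+1) := ht_mono k (by omega)
      have hSk := hSnn k hkn
      have hb := hkey (k+1) (by omega) hm
      have hSstep : ∑ i ∈ Finset.Icc 1 (k+1), y i * (t i - t (i - 1))
          = (∑ i ∈ Finset.Icc 1 k, y i * (t i - t (i - 1))) + y (k+1) * (t (k+1) - t k) := by
        rw [Finset.sum_Icc_succ_top (by omega : 1 ≤ k + 1)]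
        simp
      have hlen : t (k+1) * y (k+1) - t k * y (k+1)
          = (∑ i ∈ Finset.Icc 1 (k+1), y i * (t i - t (i - 1)))
            - ∑ i ∈ Finset.Icc 1 k, y i * (t i - t (i - 1)) := by
        rw [hSstep]; ring
      have hshift := mul_log_shift (a := t k * y (k+1)) (b := t (k+1) * y (k+1))
        (c := ∑ i ∈ Finset.Icc 1 k, y i * (t i - t (i - 1)))
        (d := ∑ i ∈ Finset.Icc 1 (k+1), y i * (t i - t (i - 1)))
        (mul_nonneg htk hy1) hSk
        (mul_le_mul_of_nonneg_right htk1 hy1) hb hlen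
      have hR : ∑ i ∈ Finset.Icc 1 (k+1),
            (t (i - 1) * y i * Real.log (t (i - 1) * y i) -
              t i * y i * Real.log (t i * y i))
          = (∑ i ∈ Finset.Icc 1 k,
              (t (i - 1) * y i * Real.log (t (i - 1) * y i) -
                t i * y i * Real.log (t i * y i)))
            + (t (k + 1 - 1) * y (k+1) * Real.log (t (k + 1 - 1) * y (k+1)) -
                t (k+1) * y (k+1) * Real.log (t (k+1) * y (k+1))) :=
        Finset.sum_Icc_succ_top (by omega : 1 ≤ k + 1) _
      rw [hR]
      simp only [Nat.add_sub_cancel]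
      have ihk := ih hkn
      linarith [ihk, hshift]
  rw [hA]
  exact main n (le_refl n)
end

section
/- The vector (A, y₂t₁, y₃t₂, ..., yₙtₙ₋₁) majorizes the vector (y₁t₁, y₂t₂, ..., yₙtₙ), where y₁ ≥ y₂ ≥ ... ≥ yₙ ≥ 0, 0 = t₀ ≤ t₁ ≤ ... ≤ tₙ, and A = ∑_{i=1}^n yᵢ(tᵢ - tᵢ₋₁). -/
open Finset

/-- `a` majorizes `b`: the sum of the `k` largest entries of `a` dominates that of `b`
for every `k` (equivalently, every partial sum of `b`-entries is dominated by some
equal-sized partial sum of `a`-entries), and the total sums are equal. -/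
def Majorizes {n : ℕ} (a b : Fin n → ℝ) : Prop :=
  (∀ s : Finset (Fin n), ∃ s' : Finset (Fin n), s'.card = s.card ∧
      ∑ i ∈ s, b i ≤ ∑ i ∈ s', a i) ∧
    ∑ i, a i = ∑ i, b i

/-- Abel summation for our situation. -/
lemma abel_step (y t : ℕ → ℝ) (ht0 : t 0 = 0) (m : ℕ) :
    ∑ j ∈ Finset.Icc 1 (m+1), y j * (t j - t (j-1)) =
      y (m+1) * t (m+1) + ∑ j ∈ Finset.Icc 1 m, (y j - y (j+1)) * t j := by
  induction m with
  | zero => simp [ht0]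
  | succ k ih =>
      rw [Finset.sum_Icc_succ_top (show (1:ℕ) ≤ k + 1 + 1 by omega), ih,
        Finset.sum_Icc_succ_top (show (1:ℕ) ≤ k + 1 by omega)]
      simp only [Nat.add_sub_cancel]
      ring

lemma sum_shift_eq (y t : ℕ → ℝ) (ht0 : t 0 = 0) (n : ℕ) :
    ∑ j ∈ Finset.Icc 1 n, y j * (t j - t (j-1)) + ∑ i ∈ Finset.Ico 1 n, y (i+1) * t i
      = ∑ i ∈ Finset.range n, y (i+1) * t (i+1) := by
  induction n with
  | zero => simp
  | succ k ih =>
      rcases Nat.eq_zero_or_pos k with hk | hk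
      · subst hk; simp [ht0]
      · rw [Finset.sum_Icc_succ_top (by omega), Finset.sum_Ico_succ_top (by omega),
          Finset.sum_range_succ, ← ih]
        simp only [Nat.add_sub_cancel]
        ring

lemma t_nonneg (n : ℕ) (t : ℕ → ℝ) (ht0 : t 0 = 0)
    (ht_mono : ∀ i, i < n → t i ≤ t (i + 1)) :
    ∀ j, j ≤ n → 0 ≤ t j := by
  intro j
  induction j with
  | zero => intro _; simp [ht0]
  | succ k ih =>
      intro hk
      exact le_trans (ih (by omega)) (ht_mono k (by omega))

/-- Core combinatorial lemma, stated over ℕ. -/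
lemma key_subset (n : ℕ) (y t : ℕ → ℝ)
    (hy_mono : ∀ i, 1 ≤ i → i < n → y (i + 1) ≤ y i)
    (hy_nonneg : ∀ i, 1 ≤ i → i ≤ n → 0 ≤ y i)
    (ht0 : t 0 = 0)
    (ht_mono : ∀ i, i < n → t i ≤ t (i + 1))
    (A : ℝ) (hA : A = ∑ i ∈ Finset.Icc 1 n, y i * (t i - t (i - 1)))
    (s : Finset ℕ) (hs : ∀ i ∈ s, i < n) :
    ∃ s' : Finset ℕ, (∀ i ∈ s', i < n) ∧ s'.card = s.card ∧
      ∑ i ∈ s, y (i+1) * t (i+1) ≤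
        ∑ i ∈ s', (if i = 0 then A else y (i+1) * t i) := by
  rcases s.eq_empty_or_nonempty with rfl | hne
  · exact ⟨∅, by simp, by simp, by simp⟩
  · set m := s.max' hne with hm_def
    have hm : m ∈ s := s.max'_mem hne
    have hmlt : m < n := hs m hm
    have hmax : ∀ i ∈ s, i ≤ m := fun i hi => s.le_max' i hi
    set e := (s.erase m).image (· + 1) with he_def
    refine ⟨insert 0 e, ?_, ?_, ?_⟩
    · intro i hi
      rcases Finset.mem_insert.mp hi with rfl | hi
      · omega
      · obtain ⟨j, hj, rfl⟩ := Finset.mem_image.mp hi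
        have h1 := hmax j (Finset.mem_of_mem_erase hj)
        have h2 := Finset.ne_of_mem_erase hj
        show j + 1 < n
        omega
    · have h0 : (0 : ℕ) ∉ e := by
        simp only [he_def, Finset.mem_image]
        rintro ⟨j, _, hj⟩
        simp at hj
      have hinj : Function.Injective (· + 1 : ℕ → ℕ) := fun a b h => by simpa using h
      rw [Finset.card_insert_of_notMem h0, he_def,
        Finset.card_image_of_injective _ hinj, Finset.card_erase_of_mem hm]
      have : 1 ≤ s.card := Finset.card_pos.mpr hne
      omega
    · -- the main inequality
      have h0 : (0 : ℕ) ∉ e := by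
        simp only [he_def, Finset.mem_image]
        rintro ⟨j, _, hj⟩
        simp at hj
      have hinj : Set.InjOn (· + 1 : ℕ → ℕ) (s.erase m) := fun a _ b _ h => by simpa using h
      -- rewrite RHS
      rw [Finset.sum_insert h0, if_pos rfl]
      have hRHS : ∑ i ∈ e, (if i = 0 then A else y (i+1) * t i)
          = ∑ i ∈ s.erase m, y (i+2) * t (i+1) := by
        rw [he_def, Finset.sum_image hinj]
        refine Finset.sum_congr rfl fun i _ => ?_
        simp [Nat.succ_ne_zero]
      rw [hRHS]
      -- rewrite LHS
      rw [← Finset.add_sum_erase s (fun i => y (i+1) * t (i+1)) hm]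
      -- t is nonneg up to n
      have htnn := t_nonneg n t ht0 ht_mono
      -- A ≥ truncated sum
      have hA1 : ∑ j ∈ Finset.Icc 1 (m+1), y j * (t j - t (j-1)) ≤ A := by
        rw [hA]
        apply Finset.sum_le_sum_of_subset_of_nonneg
        · exact Finset.Icc_subset_Icc_right (by omega)
        · intro j hj _
          have hj' := Finset.mem_Icc.mp hj
          have h1 : 0 ≤ y j := hy_nonneg j hj'.1 hj'.2
          have h2 : t (j-1) ≤ t j := by
            have := ht_mono (j-1) (by omega)
            have : t (j - 1) ≤ t (j - 1 + 1) := this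
            rwa [show j - 1 + 1 = j by omega] at this
          nlinarith
      rw [abel_step y t ht0 m] at hA1
      -- the image sum is dominated by the Icc sum
      have hsub : e ⊆ Finset.Icc 1 m := by
        intro j hj
        obtain ⟨i, hi, rfl⟩ := Finset.mem_image.mp (he_def ▸ hj)
        have h1 := hmax i (Finset.mem_of_mem_erase hi)
        have h2 := Finset.ne_of_mem_erase hi
        simp only [Finset.mem_Icc]
        omega
      have hdom : ∑ j ∈ e, (y j - y (j+1)) * t j
          ≤ ∑ j ∈ Finset.Icc 1 m, (y j - y (j+1)) * t j := by
        apply Finset.sum_le_sum_of_subset_of_nonneg hsub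
        intro j hj _
        have hj' := Finset.mem_Icc.mp hj
        have h1 : y (j+1) ≤ y j := hy_mono j hj'.1 (by omega)
        have h2 : 0 ≤ t j := htnn j (by omega)
        nlinarith
      have himg : ∑ j ∈ e, (y j - y (j+1)) * t j
          = ∑ i ∈ s.erase m, (y (i+1) - y (i+2)) * t (i+1) := by
        rw [he_def, Finset.sum_image hinj]
      have hsplit : ∑ i ∈ s.erase m, (y (i+1) - y (i+2)) * t (i+1)
          = ∑ i ∈ s.erase m, y (i+1) * t (i+1) - ∑ i ∈ s.erase m, y (i+2) * t (i+1) := by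
        rw [← Finset.sum_sub_distrib]
        exact Finset.sum_congr rfl fun i _ => by ring
      rw [himg, hsplit] at hdom
      linarith

/-- Sum over `attachFin` equals the sum over the ℕ-finset. -/
lemma sum_attachFin {n : ℕ} (s : Finset ℕ) (h : ∀ m ∈ s, m < n) (f : ℕ → ℝ) :
    ∑ i ∈ s.attachFin h, f (i : ℕ) = ∑ j ∈ s, f j := by
  apply Finset.sum_bij (fun (i : Fin n) _ => (i : ℕ))
  · intro a ha
    exact (Finset.mem_attachFin h).mp ha
  · intro a _ b _ hab
    exact Fin.ext hab
  · intro j hj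
    exact ⟨⟨j, h j hj⟩, (Finset.mem_attachFin h).mpr hj, rfl⟩
  · intro a _
    rfl

/-- With `y₁ ≥ ... ≥ yₙ ≥ 0`, `0 = t₀ ≤ t₁ ≤ ... ≤ tₙ` and
`A = ∑ yᵢ (tᵢ - tᵢ₋₁)`, the vector `(A, y₂t₁, y₃t₂, ..., yₙtₙ₋₁)` majorizes the
vector `(y₁t₁, y₂t₂, ..., yₙtₙ)`. -/
theorem majorization_of_step_data (n : ℕ) (y t : ℕ → ℝ)
    (hy_mono : ∀ i, 1 ≤ i → i < n → y (i + 1) ≤ y i)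
    (hy_nonneg : ∀ i, 1 ≤ i → i ≤ n → 0 ≤ y i)
    (ht0 : t 0 = 0)
    (ht_mono : ∀ i, i < n → t i ≤ t (i + 1))
    (A : ℝ) (hA : A = ∑ i ∈ Finset.Icc 1 n, y i * (t i - t (i - 1))) :
    Majorizes (fun i : Fin n => if (i : ℕ) = 0 then A else y ((i : ℕ) + 1) * t (i : ℕ))
      (fun i : Fin n => y ((i : ℕ) + 1) * t ((i : ℕ) + 1)) := by
  constructor
  · intro s
    have hsbound : ∀ i ∈ s.image (Fin.val), i < n := by
      intro i hi
      obtain ⟨j, _, rfl⟩ := Finset.mem_image.mp hi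
      exact j.isLt
    obtain ⟨s', hbound, hcard, hineq⟩ :=
      key_subset n y t hy_mono hy_nonneg ht0 ht_mono A hA (s.image Fin.val) hsbound
    refine ⟨s'.attachFin hbound, ?_, ?_⟩
    · rw [Finset.card_attachFin, hcard,
        Finset.card_image_of_injective _ Fin.val_injective]
    · calc ∑ i ∈ s, y ((i : ℕ) + 1) * t ((i : ℕ) + 1)
          = ∑ j ∈ s.image Fin.val, y (j+1) * t (j+1) := by
            rw [Finset.sum_image (fun a _ b _ h => Fin.val_injective h)]
        _ ≤ ∑ j ∈ s', (if j = 0 then A else y (j+1) * t j) := hineq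
        _ = ∑ i ∈ s'.attachFin hbound,
              (if (i : ℕ) = 0 then A else y ((i : ℕ) + 1) * t (i : ℕ)) :=
            (sum_attachFin s' hbound (fun j => if j = 0 then A else y (j+1) * t j)).symm
  · rw [Fin.sum_univ_eq_sum_range (fun j => if j = 0 then A else y (j + 1) * t j),
      Fin.sum_univ_eq_sum_range (fun j => y (j + 1) * t (j + 1))]
    rcases Nat.eq_zero_or_pos n with rfl | hn
    · simp
    · have hrange : Finset.range n = insert 0 (Finset.Ico 1 n) := by
        ext i
        simp only [Finset.mem_range, Finset.mem_insert, Finset.mem_Ico]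
        omega
      nth_rewrite 1 [hrange]
      rw [Finset.sum_insert (by simp), if_pos rfl]
      have : ∑ i ∈ Finset.Ico 1 n, (if i = 0 then A else y (i+1) * t i)
          = ∑ i ∈ Finset.Ico 1 n, y (i+1) * t i := by
        refine Finset.sum_congr rfl fun i hi => ?_
        have := (Finset.mem_Ico.mp hi).1
        rw [if_neg (by omega)]
      rw [this, hA]
      exact sum_shift_eq y t ht0 n
end

section
/- Let f be a positive monotone decreasing function on [a,b] with 0 < a < b. Let P = a·f(a) and Q = ∫ₐ^b f dx. Then -∫ₐ^b f·(1 + ln(x·f(x))) dx ≥ P·ln P - (P+Q)·ln(P+Q). -/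
open MeasureTheory intervalIntegral Real

/-- Let `f` be positive and monotone decreasing on `[a,b]` with `0 < a < b`, and set
`P = a f(a)` and `Q = ∫ₐᵇ f`.  Then
`-∫ₐᵇ f (1 + ln(x f(x))) dx ≥ P ln P - (P+Q) ln(P+Q)`. -/
theorem corner_integral_lower_bound (a b : ℝ) (ha : 0 < a) (hab : a < b)
    (f : ℝ → ℝ) (hf_pos : ∀ x ∈ Set.Icc a b, 0 < f x)
    (hf_mono : AntitoneOn f (Set.Icc a b))
    (P Q : ℝ) (hP : P = a * f a) (hQ : Q = ∫ x in a..b, f x) :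
    P * Real.log P - (P + Q) * Real.log (P + Q) ≤
      -∫ x in a..b, f x * (1 + Real.log (x * f x)) := by
  classical
  -- extend `f` to a global antitone function `g`
  set g : ℝ → ℝ := fun x => f (max a (min x b)) with hg_def
  have hmem : ∀ x : ℝ, max a (min x b) ∈ Set.Icc a b := by
    intro x
    exact ⟨le_max_left _ _, max_le hab.le (min_le_right _ _)⟩
  have hg_anti : Antitone g := by
    intro x y hxy
    exact hf_mono (hmem x) (hmem y) (max_le_max le_rfl (min_le_min hxy le_rfl))
  have hg_eq : ∀ x ∈ Set.Icc a b, g x = f x := by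
    intro x hx
    simp only [hg_def, min_eq_left hx.2, max_eq_right hx.1]
  have hg_pos : ∀ x : ℝ, 0 < g x := fun x => hf_pos _ (hmem x)
  have hg_int : ∀ c d : ℝ, IntervalIntegrable g volume c d := fun c d =>
    (hg_anti.antitoneOn _).intervalIntegrable
  -- the primitive F
  set F : ℝ → ℝ := fun x => P + ∫ t in a..x, g t with hF_def
  have hFcont : Continuous F :=
    continuous_const.add (intervalIntegral.continuous_primitive hg_int a)
  have hga : g a = f a := hg_eq a ⟨le_rfl, hab.le⟩
  -- key pointwise bound : x * g x ≤ F x on [a,b]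
  have key : ∀ x ∈ Set.Icc a b, x * g x ≤ F x := by
    intro x hx
    have h1 : (x - a) * g x ≤ ∫ t in a..x, g t := by
      have := intervalIntegral.integral_mono_on hx.1 intervalIntegrable_const
        (hg_int a x) (fun t ht => hg_anti ht.2 : ∀ t ∈ Set.Icc a x, g x ≤ g t)
      simpa using this
    have h2 : a * g x ≤ P := by
      rw [hP, ← hga]
      exact mul_le_mul_of_nonneg_left (hg_anti hx.1) ha.le
    have : x * g x = a * g x + (x - a) * g x := by ring
    rw [this]
    exact add_le_add h2 h1
  have hF_pos : ∀ x ∈ Set.Icc a b, 0 < F x := by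
    intro x hx
    have hx0 : 0 < x := lt_of_lt_of_le ha hx.1
    exact lt_of_lt_of_le (mul_pos hx0 (hg_pos x)) (key x hx)
  -- discontinuity set
  set S : Set ℝ := {x | ¬ContinuousAt g x} with hS_def
  have hS : S.Countable := hg_anti.countable_not_continuousAt
  set D : ℝ → ℝ := fun x => Function.rightLim g x with hD_def
  -- right derivative of F
  have hFderiv : ∀ x : ℝ, HasDerivWithinAt F (D x) (Set.Ioi x) x := by
    intro x
    have hmeas : StronglyMeasurableAtFilter g (nhdsWithin x (Set.Ioi x)) volume :=
      hg_anti.measurable.stronglyMeasurable.stronglyMeasurableAtFilter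
    have hb : Filter.Tendsto g (nhdsWithin x (Set.Ioi x) ⊓ ae volume) (nhds (D x)) :=
      (hg_anti.tendsto_rightLim x).mono_left inf_le_left
    have := (intervalIntegral.integral_hasDerivWithinAt_of_tendsto_ae_right
      (hg_int a x) hmeas hb : HasDerivWithinAt (fun u => ∫ t in a..u, g t) (D x)
        (Set.Ici x) x)
    exact (this.const_add P).mono Set.Ioi_subset_Ici_self
  -- the function G = F log F
  set G : ℝ → ℝ := fun x => F x * Real.log (F x) with hG_def
  have hGcont : ContinuousOn G (Set.Icc a b) :=
    hFcont.continuousOn.mul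
      (hFcont.continuousOn.log fun x hx => (hF_pos x hx).ne')
  have hGderiv : ∀ x ∈ Set.Ioo a b,
      HasDerivWithinAt G (D x * (1 + Real.log (F x))) (Set.Ioi x) x := by
    intro x hx
    have hFx : F x ≠ 0 := (hF_pos x (Set.Ioo_subset_Icc_self hx)).ne'
    have h1 := hFderiv x
    have h2 : HasDerivWithinAt (fun y => Real.log (F y)) ((F x)⁻¹ * D x)
        (Set.Ioi x) x := (Real.hasDerivAt_log hFx).comp_hasDerivWithinAt x h1
    have h3 : HasDerivWithinAt G (D x * Real.log (F x) + F x * ((F x)⁻¹ * D x)) (Set.Ioi x) x := h1.mul h2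
    convert h3 using 1
    rw [mul_inv_cancel_left₀ hFx]
    ring
  -- the integrand
  set φ : ℝ → ℝ := fun x => g x * (1 + Real.log (x * g x)) with hφ_def
  have hφmeas : Measurable φ :=
    hg_anti.measurable.mul
      ((measurable_const.add (measurable_id.mul hg_anti.measurable).log))
  -- integrability of φ on [a,b]
  have hφint : IntegrableOn φ (Set.Icc a b) volume := by
    set C : ℝ := g a * (1 + |Real.log (a * g b)| + |Real.log (b * g a)|) with hC_def
    have hbound : ∀ x ∈ Set.Icc a b, ‖φ x‖ ≤ C := by
      intro x hx
      have hx0 : 0 < x := lt_of_lt_of_le ha hx.1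
      have hgx : 0 < g x := hg_pos x
      have hlow : a * g b ≤ x * g x :=
        mul_le_mul hx.1 (hg_anti hx.2) (hg_pos b).le hx0.le
      have hhigh : x * g x ≤ b * g a :=
        mul_le_mul hx.2 (hg_anti hx.1) hgx.le (lt_of_lt_of_le ha hab.le).le
      have habs : |Real.log (x * g x)| ≤ |Real.log (a * g b)| + |Real.log (b * g a)| := by
        have h1 : Real.log (a * g b) ≤ Real.log (x * g x) :=
          Real.log_le_log (mul_pos ha (hg_pos b)) hlow
        have h2 : Real.log (x * g x) ≤ Real.log (b * g a) :=
          Real.log_le_log (mul_pos hx0 hgx) hhigh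
        rw [abs_le]
        constructor
        · have := neg_abs_le (Real.log (a * g b))
          have := abs_nonneg (Real.log (b * g a))
          linarith
        · have := le_abs_self (Real.log (b * g a))
          have := abs_nonneg (Real.log (a * g b))
          linarith
      have h1 : ‖φ x‖ = |g x| * |1 + Real.log (x * g x)| := by
        rw [hφ_def]; exact abs_mul _ _
      rw [h1, abs_of_pos hgx]
      have h2 : |1 + Real.log (x * g x)| ≤
          1 + |Real.log (a * g b)| + |Real.log (b * g a)| := by
        calc |1 + Real.log (x * g x)| ≤ |(1 : ℝ)| + |Real.log (x * g x)| := abs_add_le _ _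
        _ ≤ 1 + (|Real.log (a * g b)| + |Real.log (b * g a)|) := by
            rw [abs_one]; linarith
        _ = 1 + |Real.log (a * g b)| + |Real.log (b * g a)| := by ring
      calc g x * |1 + Real.log (x * g x)| ≤
          g a * (1 + |Real.log (a * g b)| + |Real.log (b * g a)|) :=
            mul_le_mul (hg_anti hx.1) h2 (abs_nonneg _)
              (hg_pos a).le
      _ = C := rfl
    refine Integrable.mono' ((integrableOn_const measure_Icc_lt_top.ne : IntegrableOn (fun _ => C) (Set.Icc a b) volume))
      (hφmeas.aestronglyMeasurable.restrict) ?_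
    exact (ae_restrict_mem measurableSet_Icc).mono hbound
  -- the modified integrand
  set ψ : ℝ → ℝ := fun x => if x ∈ S then D x * (1 + Real.log (F x)) else φ x
    with hψ_def
  have haeeq : ψ =ᵐ[volume] φ := by
    rw [Filter.eventuallyEq_iff_exists_mem]
    refine ⟨Sᶜ, ?_, fun x hx => if_neg hx⟩
    rw [mem_ae_iff, compl_compl]
    exact hS.measure_zero _
  have hψint : IntegrableOn ψ (Set.Icc a b) volume :=
    hφint.congr (ae_restrict_of_ae haeeq.symm)
  have hψle : ∀ x ∈ Set.Ioo a b, ψ x ≤ D x * (1 + Real.log (F x)) := by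
    intro x hx
    by_cases hxS : x ∈ S
    · rw [hψ_def]; simp [hxS]
    · rw [hψ_def]
      simp only [hxS, if_false]
      have hcont : ContinuousAt g x := not_not.1 hxS
      have hDx : D x = g x :=
        rightLim_eq_of_tendsto (h := nhdsGT_neBot x)
          (hcont.continuousWithinAt.tendsto)
      rw [hDx]
      have hx0 : 0 < x := lt_of_lt_of_le ha hx.1.le
      have hgx : 0 < g x := hg_pos x
      refine mul_le_mul_of_nonneg_left ?_ hgx.le
      have := Real.log_le_log (mul_pos hx0 hgx) (key x (Set.Ioo_subset_Icc_self hx))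
      linarith
  -- apply the FTC inequality
  have main : (∫ y in a..b, ψ y) ≤ G b - G a :=
    intervalIntegral.integral_le_sub_of_hasDeriv_right_of_le hab.le hGcont hGderiv
      hψint hψle
  -- identify the endpoints
  have hFa : F a = P := by simp [hF_def]
  have hQg : (∫ x in a..b, g x) = Q := by
    rw [hQ]
    apply intervalIntegral.integral_congr
    intro x hx
    rw [Set.uIcc_of_le hab.le] at hx
    exact hg_eq x hx
  have hFb : F b = P + Q := by rw [hF_def]; simp [hQg]
  have hGa : G a = P * Real.log P := by rw [hG_def]; simp [hFa]
  have hGb : G b = (P + Q) * Real.log (P + Q) := by rw [hG_def]; simp [hFb]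
  -- identify the integrals
  have hint1 : (∫ y in a..b, ψ y) = ∫ y in a..b, φ y :=
    intervalIntegral.integral_congr_ae
      (haeeq.mono fun x hx _ => hx)
  have hint2 : (∫ y in a..b, φ y) = ∫ x in a..b, f x * (1 + Real.log (x * f x)) := by
    apply intervalIntegral.integral_congr
    intro x hx
    rw [Set.uIcc_of_le hab.le] at hx
    rw [hφ_def]
    simp only [hg_eq x hx]
  rw [hGa, hGb, hint1, hint2] at main
  linarith
end

section
/- Let f: (0,b) → (0,∞) be monotone decreasing with ∫₀^b f(x)^s dx < ∞ for some s > 0. Then the slide function σ_f(t) = -1 - ∫₀^b (f(x)^t/A(t))·ln(x·f(x)^t/A(t)) dx, where A(t) = ∫₀^b f(x)^t dx, is defined (finite) for all t ∈ [0, s/2] and is continuous from the right at t = 0 with σ_f(0) = 0. -/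
open MeasureTheory Real

/-- `A(t) = ∫₀ᵇ f(x)^t dx`. -/
noncomputable def slideA (b : ℝ) (f : ℝ → ℝ) (t : ℝ) : ℝ :=
  ∫ x in Set.Ioo 0 b, f x ^ t

/-- The slide function `σ_f(t) = -1 - ∫₀ᵇ (f^t/A(t)) ln(x f^t/A(t)) dx`. -/
noncomputable def slideFun (b : ℝ) (f : ℝ → ℝ) (t : ℝ) : ℝ :=
  -1 - ∫ x in Set.Ioo 0 b,
    (f x ^ t / slideA b f t) * Real.log (x * (f x ^ t / slideA b f t))

open Set Filter Topology in
set_option maxHeartbeats 1000000 in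
/-- If `f : (0,b) → (0,∞)` is monotone decreasing with `∫₀ᵇ f^s < ∞` for some `s > 0`,
then the slide function `σ_f` is defined (all integrals converge) on `[0, s/2]`,
`σ_f(0) = 0`, and `σ_f` is continuous from the right at `0`. -/
theorem slideFun_defined_and_right_continuous (b : ℝ) (hb : 0 < b) (f : ℝ → ℝ)
    (hf_mono : AntitoneOn f (Set.Ioo 0 b)) (hf_pos : ∀ x ∈ Set.Ioo 0 b, 0 < f x)
    (s : ℝ) (hs : 0 < s) (hint : IntegrableOn (fun x => f x ^ s) (Set.Ioo 0 b)) :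
    (∀ t ∈ Set.Icc (0:ℝ) (s / 2),
        IntegrableOn (fun x => f x ^ t) (Set.Ioo 0 b) ∧
        IntegrableOn (fun x =>
          (f x ^ t / slideA b f t) * Real.log (x * (f x ^ t / slideA b f t)))
          (Set.Ioo 0 b)) ∧
      slideFun b f 0 = 0 ∧
      ContinuousWithinAt (slideFun b f) (Set.Ici 0) 0 := by
  have hSm : MeasurableSet (Ioo (0:ℝ) b) := measurableSet_Ioo
  have hfae : AEMeasurable f (volume.restrict (Ioo (0:ℝ) b)) :=
    aemeasurable_restrict_of_antitoneOn hSm hf_mono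
  have hfaet : ∀ t : ℝ, AEMeasurable (fun x => f x ^ t) (volume.restrict (Ioo (0:ℝ) b)) :=
    fun t => (measurable_id.pow_const t).comp_aemeasurable hfae
  set C := ∫ x in Ioo (0:ℝ) b, f x ^ s with hCdef
  have hC0 : 0 ≤ C := setIntegral_nonneg hSm fun x hx => rpow_nonneg (hf_pos x hx).le _
  -- pointwise bound f x ^ s * x ≤ C
  have hfsx : ∀ x ∈ Ioo (0:ℝ) b, f x ^ s * x ≤ C := by
    intro x hx
    have hsub : Ioo (0:ℝ) x ⊆ Ioo (0:ℝ) b := Ioo_subset_Ioo le_rfl hx.2.le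
    have h1 : IntegrableOn (fun y => f y ^ s) (Ioo 0 x) := hint.mono_set hsub
    have hconst : (∫ _ in Ioo (0:ℝ) x, f x ^ s) = f x ^ s * x := by
      simp [Real.volume_Ioo, ENNReal.toReal_ofReal hx.1.le, mul_comm, max_eq_left hx.1.le]
    calc f x ^ s * x = ∫ _ in Ioo (0:ℝ) x, f x ^ s := hconst.symm
      _ ≤ ∫ y in Ioo (0:ℝ) x, f y ^ s := by
          refine setIntegral_mono_on
            (integrableOn_const measure_Ioo_lt_top.ne) h1 measurableSet_Ioo ?_
          intro y hy
          exact Real.rpow_le_rpow (hf_pos x hx).le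
            (hf_mono (hsub hy) hx hy.2.le) hs.le
      _ ≤ C := setIntegral_mono_set hint
          ((ae_restrict_mem hSm).mono fun y hy => rpow_nonneg (hf_pos y hy).le _)
          (HasSubset.Subset.eventuallyLE hsub)
  -- basic integrable functions
  have hone : IntegrableOn (fun _ : ℝ => (1:ℝ)) (Ioo (0:ℝ) b) :=
    integrableOn_const measure_Ioo_lt_top.ne
  have hI1 : IntegrableOn (fun x => 1 + f x ^ s) (Ioo (0:ℝ) b) := hone.add hint
  have hB1 : ∀ t, 0 ≤ t → t ≤ s → ∀ x ∈ Ioo (0:ℝ) b, f x ^ t ≤ 1 + f x ^ s := by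
    intro t ht hts x hx
    have hfx := hf_pos x hx
    rcases le_total (f x) 1 with h1 | h1
    · have h2 := Real.rpow_le_one hfx.le h1 ht
      nlinarith [Real.rpow_nonneg hfx.le s]
    · have h2 := Real.rpow_le_rpow_of_exponent_le h1 hts
      nlinarith
  have hIt : ∀ t, 0 ≤ t → t ≤ s → IntegrableOn (fun x => f x ^ t) (Ioo (0:ℝ) b) := by
    intro t ht hts
    refine Integrable.mono' hI1 (hfaet t).aestronglyMeasurable ?_
    filter_upwards [ae_restrict_mem hSm] with x hx
    rw [Real.norm_eq_abs, abs_of_nonneg (rpow_nonneg (hf_pos x hx).le t)]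
    exact hB1 t ht hts x hx
  -- lower bound for A(t)
  set A0 := ∫ x in Ioo (0:ℝ) b, min 1 (f x ^ (s/2)) with hA0def
  have hminI : IntegrableOn (fun x => min 1 (f x ^ (s/2))) (Ioo (0:ℝ) b) := by
    refine Integrable.mono' hone
      (aemeasurable_const.min (hfaet (s/2))).aestronglyMeasurable ?_
    filter_upwards [ae_restrict_mem hSm] with x hx
    rw [Real.norm_eq_abs,
      abs_of_nonneg (le_min zero_le_one (rpow_nonneg (hf_pos x hx).le _))]
    exact min_le_left _ _
  have hA0pos : 0 < A0 := by
    rw [hA0def, setIntegral_pos_iff_support_of_nonneg_ae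
      ((ae_restrict_mem hSm).mono fun x hx =>
        (lt_min zero_lt_one (rpow_pos_of_pos (hf_pos x hx) _)).le) hminI]
    have hsub : Ioo (0:ℝ) b ⊆ Function.support (fun x => min 1 (f x ^ (s/2))) ∩ Ioo (0:ℝ) b :=
      fun x hx => ⟨(lt_min zero_lt_one (rpow_pos_of_pos (hf_pos x hx) _)).ne', hx⟩
    calc (0:ENNReal) < volume (Ioo (0:ℝ) b) := by
            simp [Real.volume_Ioo, ENNReal.ofReal_pos, hb]
      _ ≤ _ := measure_mono hsub
  have hAlow : ∀ t, 0 ≤ t → t ≤ s/2 → A0 ≤ slideA b f t := by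
    intro t ht hts
    refine setIntegral_mono_on hminI (hIt t ht (by linarith)) hSm ?_
    intro x hx
    have hfx := hf_pos x hx
    rcases le_total 1 (f x) with h1 | h1
    · refine le_trans (min_le_left _ _) ?_
      have := Real.rpow_le_rpow_of_exponent_le h1 ht
      simpa using this
    · exact le_trans (min_le_right _ _)
        (Real.rpow_le_rpow_of_exponent_ge hfx h1 hts)
  set A1 := ∫ x in Ioo (0:ℝ) b, (1 + f x ^ s) with hA1def
  have hAup : ∀ t, 0 ≤ t → t ≤ s/2 → slideA b f t ≤ A1 := by
    intro t ht hts
    exact setIntegral_mono_on (hIt t ht (by linarith)) hI1 hSm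
      (fun x hx => hB1 t ht (by linarith) x hx)
  have hLA : ∀ t, 0 ≤ t → t ≤ s/2 →
      |Real.log (slideA b f t)| ≤ |Real.log A0| + |Real.log A1| := by
    intro t ht hts
    have h1 := hAlow t ht hts
    have h2 := hAup t ht hts
    have hA' : 0 < slideA b f t := lt_of_lt_of_le hA0pos h1
    have e1 : Real.log A0 ≤ Real.log (slideA b f t) := Real.log_le_log hA0pos h1
    have e2 : Real.log (slideA b f t) ≤ Real.log A1 := Real.log_le_log hA' h2
    rw [abs_le]
    constructor
    · have := neg_abs_le (Real.log A0)
      have := abs_nonneg (Real.log A1)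
      linarith
    · have := le_abs_self (Real.log A1)
      have := abs_nonneg (Real.log A0)
      linarith
  -- rpow comparisons in x
  have hxq : ∀ r : ℝ, 0 ≤ r → r ≤ 3/4 → ∀ x ∈ Ioo (0:ℝ) b,
      x ^ (-r) ≤ 1 + x ^ (-(3/4:ℝ)) := by
    intro r hr hr' x hx
    rcases le_total 1 x with h1 | h1
    · have h2 : x ^ (-r) ≤ 1 :=
        Real.rpow_le_one_of_one_le_of_nonpos h1 (neg_nonpos.2 hr)
      nlinarith [Real.rpow_nonneg hx.1.le (-(3/4:ℝ))]
    · have h2 : x ^ (-r) ≤ x ^ (-(3/4:ℝ)) :=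
        Real.rpow_le_rpow_of_exponent_ge hx.1 h1 (by linarith)
      linarith
  have hlogx : ∀ x ∈ Ioo (0:ℝ) b, |Real.log x| ≤ 4 * x ^ (-(4⁻¹:ℝ)) + |Real.log b| := by
    intro x hx
    rcases le_total x 1 with h1 | h1
    · rw [abs_of_nonpos (Real.log_nonpos hx.1.le h1)]
      have h2 : Real.log (x ^ (-(4⁻¹:ℝ))) ≤ x ^ (-(4⁻¹:ℝ)) - 1 :=
        Real.log_le_sub_one_of_pos (rpow_pos_of_pos hx.1 _)
      rw [Real.log_rpow hx.1] at h2
      nlinarith [abs_nonneg (Real.log b), Real.rpow_nonneg hx.1.le (-(4⁻¹:ℝ))]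
    · rw [abs_of_nonneg (Real.log_nonneg h1)]
      have h2 : Real.log x ≤ Real.log b := Real.log_le_log hx.1 hx.2.le
      have h3 := le_abs_self (Real.log b)
      nlinarith [Real.rpow_nonneg hx.1.le (-(4⁻¹:ℝ))]
  have hB2 : ∀ t, 0 ≤ t → t ≤ s/2 → ∀ x ∈ Ioo (0:ℝ) b,
      f x ^ t ≤ 1 + C ^ (2⁻¹:ℝ) * x ^ (-(2⁻¹:ℝ)) := by
    intro t ht hts x hx
    have hfx := hf_pos x hx
    rcases le_total (f x) 1 with h1 | h1
    · have h2 := Real.rpow_le_one hfx.le h1 ht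
      have h3 : 0 ≤ C ^ (2⁻¹:ℝ) * x ^ (-(2⁻¹:ℝ)) := by
        apply mul_nonneg (Real.rpow_nonneg hC0 _) (Real.rpow_nonneg hx.1.le _)
      linarith
    · have h2 : f x ^ t ≤ f x ^ (s/2) := Real.rpow_le_rpow_of_exponent_le h1 hts
      have h3 : f x ^ (s/2) = (f x ^ s) ^ (2⁻¹:ℝ) := by
        rw [show s / 2 = s * (2⁻¹:ℝ) by ring, Real.rpow_mul hfx.le]
      have h4 : (f x ^ s) ^ (2⁻¹:ℝ) ≤ (C / x) ^ (2⁻¹:ℝ) := by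
        apply Real.rpow_le_rpow (Real.rpow_nonneg hfx.le s) ?_ (by norm_num)
        rw [le_div_iff₀ hx.1]
        exact hfsx x hx
      have h5 : (C / x) ^ (2⁻¹:ℝ) = C ^ (2⁻¹:ℝ) * x ^ (-(2⁻¹:ℝ)) := by
        rw [Real.div_rpow hC0 hx.1.le, Real.rpow_neg hx.1.le, div_eq_mul_inv]
      nlinarith
  set L := |Real.log b| with hLdef
  set K := 4 + L + 4 * C ^ (2⁻¹:ℝ) + C ^ (2⁻¹:ℝ) * L with hKdef
  have hDlog : ∀ t, 0 ≤ t → t ≤ s/2 → ∀ x ∈ Ioo (0:ℝ) b,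
      f x ^ t * |Real.log x| ≤ K * (1 + x ^ (-(3/4:ℝ))) := by
    intro t ht hts x hx
    have e1 := hxq 4⁻¹ (by norm_num) (by norm_num) x hx
    have e2 := hxq 2⁻¹ (by norm_num) (by norm_num) x hx
    have e4 : x ^ (-(2⁻¹:ℝ)) * x ^ (-(4⁻¹:ℝ)) = x ^ (-(3/4:ℝ)) := by
      rw [← Real.rpow_add hx.1]; norm_num
    have ha : 0 ≤ C ^ (2⁻¹:ℝ) := Real.rpow_nonneg hC0 _
    have hL0 : 0 ≤ L := abs_nonneg _
    have hu : 0 ≤ x ^ (-(2⁻¹:ℝ)) := Real.rpow_nonneg hx.1.le _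
    have hv : 0 ≤ x ^ (-(4⁻¹:ℝ)) := Real.rpow_nonneg hx.1.le _
    have hw : 0 ≤ x ^ (-(3/4:ℝ)) := Real.rpow_nonneg hx.1.le _
    have hmul : f x ^ t * |Real.log x|
        ≤ (1 + C ^ (2⁻¹:ℝ) * x ^ (-(2⁻¹:ℝ))) * (4 * x ^ (-(4⁻¹:ℝ)) + L) := by
      apply mul_le_mul (hB2 t ht hts x hx) (hlogx x hx) (abs_nonneg _) ?_
      nlinarith
    rw [hKdef]
    nlinarith [mul_le_mul_of_nonneg_left e2 (mul_nonneg ha hL0),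
      mul_le_mul_of_nonneg_left e1 (by norm_num : (0:ℝ) ≤ 4),
      mul_le_mul_of_nonneg_left hw ha]
  have hDself : ∀ t, 0 ≤ t → t ≤ s/2 → ∀ x ∈ Ioo (0:ℝ) b,
      f x ^ t * |Real.log (f x ^ t)| ≤ 1 + f x ^ s := by
    intro t ht hts x hx
    have hfx := hf_pos x hx
    have hu0 : 0 < f x ^ t := rpow_pos_of_pos hfx t
    rcases le_total (f x) 1 with h1 | h1
    · have hu1 : f x ^ t ≤ 1 := Real.rpow_le_one hfx.le h1 ht
      rw [abs_of_nonpos (Real.log_nonpos hu0.le hu1)]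
      have h2 : Real.log (f x ^ t)⁻¹ ≤ (f x ^ t)⁻¹ - 1 :=
        Real.log_le_sub_one_of_pos (by positivity)
      rw [Real.log_inv] at h2
      have h3 := mul_le_mul_of_nonneg_left h2 hu0.le
      rw [mul_sub, mul_inv_cancel₀ hu0.ne', mul_one] at h3
      nlinarith [Real.rpow_nonneg hfx.le s]
    · have hu1 : (1:ℝ) ≤ f x ^ t := by
        have := Real.rpow_le_rpow_of_exponent_le h1 ht
        simpa using this
      rw [abs_of_nonneg (Real.log_nonneg hu1)]
      have h2 : Real.log (f x ^ t) ≤ f x ^ t - 1 :=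
        Real.log_le_sub_one_of_pos hu0
      have h4 : f x ^ t * f x ^ t = f x ^ (t + t) := (Real.rpow_add hfx t t).symm
      have h5 : f x ^ (t + t) ≤ f x ^ s :=
        Real.rpow_le_rpow_of_exponent_le h1 (by linarith)
      nlinarith
  set LA := |Real.log A0| + |Real.log A1| with hLAdef
  -- master bound
  have hgb : ∀ t, 0 ≤ t → t ≤ s/2 → ∀ x ∈ Ioo (0:ℝ) b,
      |(f x ^ t / slideA b f t) * Real.log (x * (f x ^ t / slideA b f t))|
        ≤ A0⁻¹ * (K * (1 + x ^ (-(3/4:ℝ))) + (1 + f x ^ s) + (1 + f x ^ s) * LA) := by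
    intro t ht hts x hx
    have hfx := hf_pos x hx
    have hA := lt_of_lt_of_le hA0pos (hAlow t ht hts)
    have hu : 0 < f x ^ t := rpow_pos_of_pos hfx t
    have hlogeq : Real.log (x * (f x ^ t / slideA b f t))
        = Real.log x + Real.log (f x ^ t) - Real.log (slideA b f t) := by
      rw [Real.log_mul hx.1.ne' (by positivity), Real.log_div hu.ne' hA.ne']
      ring
    rw [abs_mul, hlogeq, abs_of_pos (by positivity :
      (0:ℝ) < f x ^ t / slideA b f t)]
    have h2 : |Real.log x + Real.log (f x ^ t) - Real.log (slideA b f t)|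
        ≤ |Real.log x| + |Real.log (f x ^ t)| + |Real.log (slideA b f t)| := by
      have t1 := abs_add_le (Real.log x + Real.log (f x ^ t)) (-Real.log (slideA b f t))
      have t2 := abs_add_le (Real.log x) (Real.log (f x ^ t))
      rw [abs_neg] at t1
      rw [sub_eq_add_neg]
      linarith
    have h3 : f x ^ t / slideA b f t ≤ f x ^ t / A0 :=
      div_le_div_of_nonneg_left hu.le hA0pos (hAlow t ht hts)
    have hx1 := hDlog t ht hts x hx
    have hx2 := hDself t ht hts x hx
    have hfs0 : (0:ℝ) ≤ 1 + f x ^ s := by nlinarith [Real.rpow_nonneg hfx.le s]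
    have hx3 : f x ^ t * |Real.log (slideA b f t)| ≤ (1 + f x ^ s) * LA := by
      apply mul_le_mul (hB1 t ht (by linarith) x hx) (hLA t ht hts) (abs_nonneg _) hfs0
    calc (f x ^ t / slideA b f t) *
          |Real.log x + Real.log (f x ^ t) - Real.log (slideA b f t)|
        ≤ (f x ^ t / A0) *
          (|Real.log x| + |Real.log (f x ^ t)| + |Real.log (slideA b f t)|) := by
          apply mul_le_mul h3 h2 (abs_nonneg _) (by positivity)
      _ = A0⁻¹ * (f x ^ t * |Real.log x| + f x ^ t * |Real.log (f x ^ t)|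
            + f x ^ t * |Real.log (slideA b f t)|) := by
          rw [div_eq_inv_mul]; ring
      _ ≤ _ := by
          apply mul_le_mul_of_nonneg_left ?_ (inv_nonneg.2 hA0pos.le)
          exact add_le_add (add_le_add hx1 hx2) hx3
  -- integrability of the bound
  have hBNDint : IntegrableOn (fun x =>
      A0⁻¹ * (K * (1 + x ^ (-(3/4:ℝ))) + (1 + f x ^ s) + (1 + f x ^ s) * LA))
      (Ioo (0:ℝ) b) := by
    have h1 : IntegrableOn (fun x : ℝ => x ^ (-(3/4:ℝ))) (Ioo (0:ℝ) b) :=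
      (intervalIntegral.integrableOn_Ioo_rpow_iff hb).2 (by norm_num)
    have h2 := ((hone.add h1).const_mul K).add hI1
    have h3 := h2.add (hI1.mul_const LA)
    exact h3.const_mul _
  have hgmeas : ∀ t : ℝ, AEStronglyMeasurable
      (fun x => (f x ^ t / slideA b f t) * Real.log (x * (f x ^ t / slideA b f t)))
      (volume.restrict (Ioo (0:ℝ) b)) := by
    intro t
    have h1 : AEMeasurable (fun x => f x ^ t / slideA b f t)
        (volume.restrict (Ioo (0:ℝ) b)) := (hfaet t).div_const _
    exact (h1.mul (Real.measurable_log.comp_aemeasurable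
      (aemeasurable_id.mul h1))).aestronglyMeasurable
  have hgint : ∀ t, 0 ≤ t → t ≤ s/2 → IntegrableOn
      (fun x => (f x ^ t / slideA b f t) * Real.log (x * (f x ^ t / slideA b f t)))
      (Ioo (0:ℝ) b) := by
    intro t ht hts
    refine Integrable.mono' hBNDint (hgmeas t) ?_
    filter_upwards [ae_restrict_mem hSm] with x hx
    rw [Real.norm_eq_abs]
    exact hgb t ht hts x hx
  -- value of A at 0
  have hA0eq : slideA b f 0 = b := by
    simp [slideA, Real.rpow_zero, Real.volume_Ioo, ENNReal.toReal_ofReal hb.le, hb.le]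
  -- integral of log
  have hlogint : IntegrableOn Real.log (Ioo (0:ℝ) b) := by
    have h1 : IntegrableOn (fun x : ℝ => x ^ (-(4⁻¹:ℝ))) (Ioo (0:ℝ) b) :=
      (intervalIntegral.integrableOn_Ioo_rpow_iff hb).2 (by norm_num)
    have h3 : IntegrableOn (fun _ : ℝ => L) (Ioo (0:ℝ) b) :=
      integrableOn_const measure_Ioo_lt_top.ne
    have h4 := (h1.const_mul (4:ℝ)).add h3
    refine Integrable.mono' h4 Real.measurable_log.aestronglyMeasurable ?_
    filter_upwards [ae_restrict_mem hSm] with x hx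
    rw [Real.norm_eq_abs]
    exact hlogx x hx
  have hlogval : ∫ x in Ioo (0:ℝ) b, Real.log x = b * Real.log b - b := by
    have hmono : Monotone (fun n : ℕ => Ioo (b / (n + 2)) b) := by
      intro m n hmn
      apply Ioo_subset_Ioo _ le_rfl
      apply div_le_div_of_nonneg_left hb.le (by positivity)
      exact_mod_cast by exact_mod_cast add_le_add_left (Nat.cast_le.2 hmn) 2
    have hunion : (⋃ n : ℕ, Ioo (b / (n + 2)) b) = Ioo (0:ℝ) b := by
      ext x
      simp only [mem_iUnion, mem_Ioo]
      constructor
      · rintro ⟨n, h1, h2⟩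
        exact ⟨lt_trans (by positivity) h1, h2⟩
      · rintro ⟨h1, h2⟩
        obtain ⟨n, hn⟩ := exists_nat_gt (b / x)
        refine ⟨n, ?_, h2⟩
        rw [div_lt_iff₀ (by positivity)]
        rw [div_lt_iff₀ h1] at hn
        nlinarith
    have h1 := tendsto_setIntegral_of_monotone (fun n : ℕ => measurableSet_Ioo)
      hmono (hunion ▸ hlogint)
    rw [hunion] at h1
    have hval : ∀ n : ℕ, ∫ x in Ioo (b / (n + 2)) b, Real.log x
        = b * Real.log b - b - ((b / (n + 2)) * Real.log (b / (n + 2)) - b / (n + 2)) := by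
      intro n
      have hpos : 0 < b / ((n:ℝ) + 2) := by positivity
      have hlt : b / ((n:ℝ) + 2) ≤ b := by
        rw [div_le_iff₀ (by positivity)]
        nlinarith
      rw [← integral_Ioc_eq_integral_Ioo, ← intervalIntegral.integral_of_le hlt]
      rw [integral_log]
      ring
    have hε : Tendsto (fun n : ℕ => b / ((n:ℝ) + 2)) atTop (𝓝[>] 0) := by
      apply tendsto_nhdsWithin_of_tendsto_nhds_of_eventually_within
      · apply Tendsto.div_atTop tendsto_const_nhds
        apply Filter.tendsto_atTop_add_const_right
        exact tendsto_natCast_atTop_atTop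
      · exact Filter.Eventually.of_forall fun n => mem_Ioi.2 (by positivity)
    have hxlog : Tendsto (fun n : ℕ => (b / ((n:ℝ) + 2)) * Real.log (b / ((n:ℝ) + 2)))
        atTop (𝓝 0) := by
      have h2 := (tendsto_log_mul_rpow_nhdsGT_zero zero_lt_one).comp hε
      simp only [Function.comp_def, Real.rpow_one] at h2
      simpa [mul_comm] using h2
    have hε0 : Tendsto (fun n : ℕ => b / ((n:ℝ) + 2)) atTop (𝓝 0) :=
      hε.mono_right nhdsWithin_le_nhds
    have h2 : Tendsto (fun n : ℕ => b * Real.log b - b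
        - ((b / (n + 2)) * Real.log (b / (n + 2)) - b / (n + 2)))
        atTop (𝓝 (b * Real.log b - b - (0 - 0))) :=
      tendsto_const_nhds.sub (hxlog.sub hε0)
    rw [sub_zero, sub_zero] at h2  -- adjust below if needed
    refine tendsto_nhds_unique ?_ h2
    exact h1.congr fun n => hval n
  -- value of limit integral
  have hval0 : ∫ x in Ioo (0:ℝ) b, (1 / b) * Real.log (x * (1 / b)) = -1 := by
    rw [integral_const_mul]
    have hcongr : EqOn (fun x => Real.log (x * (1 / b)))
        (fun x => Real.log x + Real.log (1 / b)) (Ioo (0:ℝ) b) := by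
      intro x hx
      exact Real.log_mul hx.1.ne' (one_div_ne_zero hb.ne')
    rw [setIntegral_congr_fun hSm hcongr,
      integral_add hlogint (integrableOn_const measure_Ioo_lt_top.ne),
      hlogval, setIntegral_const, Real.volume_real_Ioo_of_le hb.le, sub_zero,
      smul_eq_mul, one_div, Real.log_inv]
    field_simp
    ring
  -- A(t) → b
  have hA_t : Tendsto (slideA b f) (𝓝[Icc (0:ℝ) (s/2)] 0) (𝓝 b) := by
    have h := tendsto_integral_filter_of_dominated_convergence
      (μ := volume.restrict (Ioo (0:ℝ) b))
      (F := fun (t : ℝ) x => f x ^ t) (f := fun _ => (1:ℝ))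
      (l := 𝓝[Icc (0:ℝ) (s/2)] 0) (fun x => 1 + f x ^ s)
      (Filter.Eventually.of_forall fun t => (hfaet t).aestronglyMeasurable) ?_ hI1 ?_
    · have : (∫ _ in Ioo (0:ℝ) b, (1:ℝ)) = b := by
        simp [Real.volume_Ioo, ENNReal.toReal_ofReal hb.le, hb.le]
      rw [this] at h
      exact h
    · filter_upwards [self_mem_nhdsWithin] with t ht
      filter_upwards [ae_restrict_mem hSm] with x hx
      rw [Real.norm_eq_abs, abs_of_nonneg (rpow_nonneg (hf_pos x hx).le t)]
      exact hB1 t ht.1 (by linarith [ht.2]) x hx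
    · filter_upwards [ae_restrict_mem hSm] with x hx
      have hc : ContinuousAt (fun t : ℝ => f x ^ t) 0 :=
        Real.continuousAt_const_rpow (hf_pos x hx).ne'
      have := hc.tendsto
      rw [Real.rpow_zero] at this
      exact this.mono_left nhdsWithin_le_nhds
  -- main DCT for the slide integral
  have hFt : Tendsto (fun t => ∫ x in Ioo (0:ℝ) b,
      (f x ^ t / slideA b f t) * Real.log (x * (f x ^ t / slideA b f t)))
      (𝓝[Icc (0:ℝ) (s/2)] 0)
      (𝓝 (∫ x in Ioo (0:ℝ) b, (1 / b) * Real.log (x * (1 / b)))) := by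
    apply tendsto_integral_filter_of_dominated_convergence
      (bound := fun x => A0⁻¹ * (K * (1 + x ^ (-(3/4:ℝ))) + (1 + f x ^ s)
        + (1 + f x ^ s) * LA))
      (Filter.Eventually.of_forall fun t => hgmeas t) ?_ hBNDint ?_
    · filter_upwards [self_mem_nhdsWithin] with t ht
      filter_upwards [ae_restrict_mem hSm] with x hx
      rw [Real.norm_eq_abs]
      exact hgb t ht.1 ht.2 x hx
    · filter_upwards [ae_restrict_mem hSm] with x hx
      have hc : ContinuousAt (fun t : ℝ => f x ^ t) 0 :=
        Real.continuousAt_const_rpow (hf_pos x hx).ne'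
      have h1 : Tendsto (fun t : ℝ => f x ^ t) (𝓝[Icc (0:ℝ) (s/2)] 0) (𝓝 1) := by
        have := hc.tendsto
        rw [Real.rpow_zero] at this
        exact this.mono_left nhdsWithin_le_nhds
      have h2 : Tendsto (fun t => f x ^ t / slideA b f t)
          (𝓝[Icc (0:ℝ) (s/2)] 0) (𝓝 (1 / b)) := h1.div hA_t hb.ne'
      have h3 : Tendsto (fun t => x * (f x ^ t / slideA b f t))
          (𝓝[Icc (0:ℝ) (s/2)] 0) (𝓝 (x * (1 / b))) := tendsto_const_nhds.mul h2
      have h4 : Tendsto (fun t => Real.log (x * (f x ^ t / slideA b f t)))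
          (𝓝[Icc (0:ℝ) (s/2)] 0) (𝓝 (Real.log (x * (1 / b)))) :=
        (Real.continuousAt_log (mul_pos hx.1 (by positivity : (0:ℝ) < 1 / b)).ne').tendsto.comp h3
      exact h2.mul h4
  have hzero : slideFun b f 0 = 0 := by
    have hfun : (fun x => (f x ^ (0:ℝ) / slideA b f 0)
        * Real.log (x * (f x ^ (0:ℝ) / slideA b f 0)))
        = fun x => (1 / b) * Real.log (x * (1 / b)) := by
      funext x
      rw [Real.rpow_zero, hA0eq]
    rw [slideFun, hfun, hval0]
    norm_num
  refine ⟨fun t ht => ⟨hIt t ht.1 (by linarith [ht.2]), hgint t ht.1 ht.2⟩, hzero, ?_⟩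
  rw [ContinuousWithinAt, hzero,
    ← nhdsWithin_Icc_eq_nhdsGE (by positivity : (0:ℝ) < s/2)]
  have h := (tendsto_const_nhds (x := (-1:ℝ))
    (f := 𝓝[Icc (0:ℝ) (s/2)] 0)).sub hFt
  rw [hval0] at h
  norm_num at h
  exact h
end

section
/- Let D = (d₁, ..., dₙ) with d₁ ≥ d₂ ≥ ... ≥ dₙ > 0, and let f_D be the step function on [0,1) taking the value dᵢ on [(i-1)/n, i/n). Then the first slide derivative of f_D is given by ψ₁(f_D) = (1/n)·∑_{i=2}^{n-1} i·ln(i)·ln(d_{i+1}/dᵢ) + (ln(n)/n)·∑_{i=1}^{n-1} ln(dᵢ/dₙ). -/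
open MeasureTheory Real Finset

section Helpers

lemma integrableOn_log_Ioc01 : IntegrableOn Real.log (Set.Ioc 0 1) := by
  have h := intervalIntegral.integrableOn_deriv_of_nonneg (a := (0:ℝ)) (b := 1)
      (g := fun x => x - x * Real.log x) (g' := fun x => -Real.log x)
      ((continuous_id.sub Real.continuous_mul_log).continuousOn)
      (fun x hx => by
        have h2 := (hasDerivAt_id x).sub (Real.hasDerivAt_mul_log (ne_of_gt hx.1))
        exact h2.congr_deriv (by ring))
      (fun x hx => by
        have : Real.log x ≤ 0 := Real.log_nonpos hx.1.le hx.2.le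
        linarith)
  have h2 : IntegrableOn (-fun x => -Real.log x) (Set.Ioc 0 1) := h.neg
  exact h2.congr_fun (fun x _ => by simp) measurableSet_Ioc

lemma integrableOn_log_Ioc (b : ℝ) : IntegrableOn Real.log (Set.Ioc 0 b) := by
  rcases le_total b 1 with hb | hb
  · exact integrableOn_log_Ioc01.mono_set (Set.Ioc_subset_Ioc_right hb)
  · have h2 : IntegrableOn Real.log (Set.Ioc 1 b) := by
      refine ((Real.continuousOn_log.mono ?_).integrableOn_Icc).mono_set
        Set.Ioc_subset_Icc_self
      intro x hx
      simp only [Set.mem_compl_iff, Set.mem_singleton_iff]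
      exact ne_of_gt (lt_of_lt_of_le one_pos hx.1)
    have h3 := integrableOn_log_Ioc01.union h2
    rwa [Set.Ioc_union_Ioc_eq_Ioc zero_le_one hb] at h3

lemma helper_x_log {c : ℝ} (hc : c ≠ 0) {x : ℝ} (hx : 0 ≤ x) :
    x * Real.log (x * c) = x * Real.log x + x * Real.log c := by
  rcases hx.eq_or_lt with rfl | hx'
  · simp
  · rw [Real.log_mul (ne_of_gt hx') hc]; ring

lemma integrableOn_c_log {c : ℝ} (hc : 0 < c) {a b : ℝ} (ha : 0 ≤ a) :
    IntegrableOn (fun x => c * Real.log (x * c)) (Set.Ioc a b) := by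
  have hsub : Set.Ioc a b ⊆ Set.Ioc 0 (max b 1) :=
    Set.Ioc_subset_Ioc ha (le_max_left _ _)
  refine IntegrableOn.mono_set ?_ hsub
  have hbase : IntegrableOn (fun x => c * (Real.log x + Real.log c)) (Set.Ioc 0 (max b 1)) :=
    ((integrableOn_log_Ioc _).add
      (integrableOn_const measure_Ioc_lt_top.ne)).const_mul c
  refine hbase.congr_fun (fun x hx => ?_) measurableSet_Ioc
  rw [Real.log_mul (ne_of_gt hx.1) (ne_of_gt hc)]

lemma integral_c_log {a b c : ℝ} (ha : 0 ≤ a) (hab : a ≤ b) (hc : 0 < c) :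
    ∫ x in a..b, c * Real.log (x * c)
      = c * (b * Real.log (b * c) - a * Real.log (a * c) - (b - a)) := by
  have hb : 0 ≤ b := ha.trans hab
  have hcont : ContinuousOn (fun x : ℝ => c * (x * Real.log x + x * Real.log c - x))
      (Set.Icc a b) :=
    (continuous_const.mul ((Real.continuous_mul_log.add
      (continuous_id.mul continuous_const)).sub continuous_id)).continuousOn
  have hderiv : ∀ x ∈ Set.Ioo a b,
      HasDerivWithinAt (fun x : ℝ => c * (x * Real.log x + x * Real.log c - x))
        (c * Real.log (x * c)) (Set.Ioi x) x := by
    intro x hx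
    have hx0 : 0 < x := lt_of_le_of_lt ha hx.1
    refine HasDerivAt.hasDerivWithinAt ?_
    have h1 := (((Real.hasDerivAt_mul_log hx0.ne').add
        ((hasDerivAt_id x).mul_const (Real.log c))).sub (hasDerivAt_id x)).const_mul c
    refine h1.congr_deriv ?_
    rw [Real.log_mul hx0.ne' hc.ne']; ring
  have hint : IntervalIntegrable (fun x => c * Real.log (x * c)) volume a b :=
    (intervalIntegrable_iff_integrableOn_Ioc_of_le hab).mpr (integrableOn_c_log hc ha)
  rw [intervalIntegral.integral_eq_sub_of_hasDeriv_right_of_le hab hcont hderiv hint,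
    helper_x_log hc.ne' hb, helper_x_log hc.ne' ha]
  ring

lemma pieceEq {a b : ℝ} (hab : a ≤ b) {φ ψ : ℝ → ℝ} (h : ∀ x ∈ Set.Ioo a b, φ x = ψ x) :
    ∫ x in a..b, φ x = ∫ x in a..b, ψ x := by
  rw [intervalIntegral.integral_of_le hab, intervalIntegral.integral_of_le hab,
    integral_Ioc_eq_integral_Ioo, integral_Ioc_eq_integral_Ioo]
  exact setIntegral_congr_fun measurableSet_Ioo h

lemma pieceInt {a b : ℝ} (hab : a ≤ b) {φ ψ : ℝ → ℝ} (h : ∀ x ∈ Set.Ioo a b, φ x = ψ x)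
    (hψ : IntegrableOn ψ (Set.Ioc a b)) : IntervalIntegrable φ volume a b := by
  rw [intervalIntegrable_iff_integrableOn_Ioc_of_le hab,
    integrableOn_Ioc_iff_integrableOn_Ioo]
  exact (hψ.mono_set Set.Ioo_subset_Ioc_self).congr_fun
    (fun x hx => (h x hx).symm) measurableSet_Ioo

lemma abel_sum (h lam : ℕ → ℝ) (h0 : h 0 = 0) (m : ℕ) :
    ∑ i ∈ range (m+1), lam (i+1) * (h (i+1) - h i)
      = lam (m+1) * h (m+1) - ∑ i ∈ range m, h (i+1) * (lam (i+2) - lam (i+1)) := by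
  induction m with
  | zero => simp [h0]
  | succ k ih => rw [Finset.sum_range_succ, ih, Finset.sum_range_succ]; ring

lemma splitIntegral {n : ℕ} (hn : 0 < n) (φ : ℝ → ℝ)
    (hφ : ∀ i, i < n → IntervalIntegrable φ volume ((i:ℝ)/(n:ℝ)) (((i:ℝ)+1)/(n:ℝ))) :
    ∫ x in Set.Ioo (0:ℝ) 1, φ x
      = ∑ i ∈ range n, ∫ x in ((i:ℝ)/(n:ℝ))..(((i:ℝ)+1)/(n:ℝ)), φ x := by
  have hN : (0:ℝ) < (n:ℝ) := Nat.cast_pos.mpr hn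
  have h := intervalIntegral.sum_integral_adjacent_intervals
      (a := fun i : ℕ => (i:ℝ)/(n:ℝ)) (μ := volume) (f := φ) (n := n)
      (fun k hk => by simpa [Nat.cast_add, Nat.cast_one] using hφ k hk)
  simp only [Nat.cast_add, Nat.cast_one, Nat.cast_zero, zero_div,
    div_self hN.ne'] at h
  rw [← integral_Ioc_eq_integral_Ioo, ← intervalIntegral.integral_of_le zero_le_one]
  exact h.symm

lemma helper_xn_log {N C : ℝ} (hN : 0 < N) (hC : 0 < C) {x : ℝ} (hx : 0 ≤ x) :
    x/N * Real.log (x/N * C) = x/N * (Real.log x - Real.log N + Real.log C) := by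
  rcases hx.eq_or_lt with rfl | hx'
  · simp
  · rw [Real.log_mul (by positivity) hC.ne', Real.log_div hx'.ne' hN.ne']

lemma final_algebra (n : ℕ) (hn : 0 < n) (d : ℕ → ℝ)
    (hpos : ∀ i, 1 ≤ i → i ≤ n → 0 < d i) :
    (∑ i ∈ range n, Real.log (d (i+1))) / (n:ℝ) * Real.log (n:ℝ)
      - (1/(n:ℝ)) * ∑ i ∈ range n, Real.log (d (i+1))
          * (((i:ℝ)+1) * Real.log ((i:ℝ)+1) - (i:ℝ) * Real.log (i:ℝ))
    = (1 / n) * ∑ i ∈ Finset.Icc 2 (n - 1),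
          (i : ℝ) * Real.log i * Real.log (d (i + 1) / d i) +
        (Real.log n / n) * ∑ i ∈ Finset.Icc 1 (n - 1), Real.log (d i / d n) := by
  obtain ⟨m, rfl⟩ : ∃ m, n = m + 1 := ⟨n - 1, (Nat.succ_pred_eq_of_pos hn).symm⟩
  set ℓ : ℕ → ℝ := fun j => Real.log (d j) with hl
  set h : ℕ → ℝ := fun j => (j:ℝ) * Real.log (j:ℝ) with hh
  have hsum1 : ∑ i ∈ range (m+1), Real.log (d (i+1))
        * (((i:ℝ)+1) * Real.log ((i:ℝ)+1) - (i:ℝ) * Real.log (i:ℝ))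
      = ∑ i ∈ range (m+1), ℓ (i+1) * (h (i+1) - h i) := by
    refine Finset.sum_congr rfl fun i _ => ?_
    simp only [hl, hh]; push_cast; ring
  rw [hsum1, abel_sum h ℓ (by simp [hh]) m]
  simp only [Nat.add_sub_cancel]
  have hIcc2 : ∑ i ∈ Finset.Icc 2 m, (i:ℝ) * Real.log i * Real.log (d (i+1) / d i)
      = ∑ i ∈ range m, h (i+1) * (ℓ (i+2) - ℓ (i+1)) := by
    have e1 : ∑ i ∈ Finset.Icc 2 m, (i:ℝ) * Real.log i * Real.log (d (i+1) / d i)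
        = ∑ i ∈ Finset.Icc 1 m, (i:ℝ) * Real.log i * Real.log (d (i+1) / d i) := by
      rw [show (2:ℕ) = 1 + 1 from rfl, Finset.Icc_add_one_left_eq_Ioc, ← Finset.Icc_erase_left]
      exact Finset.sum_erase _ (by simp)
    rw [e1, ← Finset.Ico_add_one_right_eq_Icc, Finset.sum_Ico_eq_sum_range]
    try simp only [Nat.add_sub_cancel]
    refine Finset.sum_congr rfl fun i hi => ?_
    have hmem := Finset.mem_range.mp hi
    rw [Nat.add_comm 1 i]
    have h1 : 0 < d (i+1) := hpos _ (by omega) (by omega)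
    have h2 : 0 < d (i+1+1) := hpos _ (by omega) (by omega)
    rw [Real.log_div h2.ne' h1.ne']
    try (simp only [hl, hh]; push_cast; ring)
  have hIcc1 : ∑ i ∈ Finset.Icc 1 m, Real.log (d i / d (m+1))
      = ∑ i ∈ range m, (ℓ (i+1) - ℓ (m+1)) := by
    rw [← Finset.Ico_add_one_right_eq_Icc, Finset.sum_Ico_eq_sum_range]
    try simp only [Nat.add_sub_cancel]
    refine Finset.sum_congr rfl fun i hi => ?_
    have hmem := Finset.mem_range.mp hi
    rw [Nat.add_comm 1 i]
    have h1 : 0 < d (i+1) := hpos _ (by omega) (by omega)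
    have h2 : 0 < d (m+1) := hpos _ (by omega) (by omega)
    rw [Real.log_div h1.ne' h2.ne']
  rw [hIcc2, hIcc1]
  have hL2 : ∑ i ∈ range m, (ℓ (i+1) - ℓ (m+1))
      = (∑ i ∈ range (m+1), ℓ (i+1)) - ((m:ℝ)+1) * ℓ (m+1) := by
    rw [Finset.sum_sub_distrib, Finset.sum_const, Finset.card_range, Finset.sum_range_succ,
      nsmul_eq_mul]
    push_cast; ring
  rw [hL2]
  have hh1 : h (m+1) = ((m:ℝ)+1) * Real.log ((m:ℝ)+1) := by
    simp only [hh]; push_cast; ring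
  rw [hh1]
  have hℓcast : ∀ i : ℕ, Real.log (d i) = ℓ i := fun i => rfl
  push_cast
  ring

end Helpers

set_option maxHeartbeats 1000000 in
/-- For `d 1 ≥ d 2 ≥ ... ≥ d n > 0` and `f_D` the step function on `[0,1)` taking the
value `d i` on `[(i-1)/n, i/n)`, the first slide derivative of `f_D` equals
`(1/n) ∑_{i=2}^{n-1} i ln(i) ln(d_{i+1}/d_i) + (ln n / n) ∑_{i=1}^{n-1} ln(d_i/d_n)`. -/
theorem first_slide_derivative_of_step_function
    (n : ℕ) (hn : 0 < n) (d : ℕ → ℝ)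
    (hmono : ∀ i, 1 ≤ i → i < n → d (i + 1) ≤ d i)
    (hpos : ∀ i, 1 ≤ i → i ≤ n → 0 < d i)
    (fD : ℝ → ℝ) (hfD : ∀ x ∈ Set.Ioo (0:ℝ) 1, fD x = d (⌊x * n⌋₊ + 1)) :
    HasDerivWithinAt (slideFun 1 fD)
      ((1 / n) * ∑ i ∈ Finset.Icc 2 (n - 1),
          (i : ℝ) * Real.log i * Real.log (d (i + 1) / d i) +
        (Real.log n / n) * ∑ i ∈ Finset.Icc 1 (n - 1), Real.log (d i / d n))
      (Set.Ici 0) 0 := by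
  have hN : (0:ℝ) < (n:ℝ) := Nat.cast_pos.mpr hn
  have hd : ∀ i ∈ range n, 0 < d (i+1) := fun i hi =>
    hpos (i+1) (Nat.le_add_left 1 i) (Nat.succ_le_of_lt (mem_range.mp hi))
  have hSpos : ∀ t : ℝ, 0 < ∑ j ∈ range n, d (j+1) ^ t := fun t =>
    Finset.sum_pos (fun i hi => Real.rpow_pos_of_pos (hd i hi) t)
      (nonempty_range_iff.mpr hn.ne')
  have hS0eq : (∑ j ∈ range n, d (j+1) ^ (0:ℝ)) = (n:ℝ) := by
    simp [Real.rpow_zero]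
  have hab : ∀ i : ℕ, (i:ℝ)/(n:ℝ) ≤ ((i:ℝ)+1)/(n:ℝ) := fun i =>
    (div_le_div_iff_of_pos_right hN).mpr (by linarith)
  have ha0 : ∀ i : ℕ, (0:ℝ) ≤ (i:ℝ)/(n:ℝ) := fun i => by positivity
  have hfval : ∀ i, i < n → ∀ x ∈ Set.Ioo ((i:ℝ)/(n:ℝ)) (((i:ℝ)+1)/(n:ℝ)),
      fD x = d (i+1) := by
    intro i hi x hx
    have hx1 : (i:ℝ) < x * n := (div_lt_iff₀ hN).mp hx.1
    have hx2 : x * n < (i:ℝ)+1 := (lt_div_iff₀ hN).mp hx.2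
    have hx0 : 0 < x := lt_of_le_of_lt (ha0 i) hx.1
    have hxIoo : x ∈ Set.Ioo (0:ℝ) 1 := by
      refine ⟨hx0, lt_of_lt_of_le hx.2 ?_⟩
      rw [div_le_one hN]
      exact_mod_cast Nat.succ_le_of_lt hi
    rw [hfD x hxIoo]
    congr 2
    rw [Nat.floor_eq_iff (by positivity)]
    exact ⟨hx1.le, by exact_mod_cast hx2⟩
  -- Step 1: the value of slideA
  have hA : ∀ t : ℝ, slideA 1 fD t = (∑ j ∈ range n, d (j+1) ^ t) / (n:ℝ) := by
    intro t
    unfold slideA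
    rw [splitIntegral hn _ (fun i hi =>
      pieceInt (hab i) (ψ := fun _ => d (i+1) ^ t)
        (fun x hx => by rw [hfval i hi x hx])
        (integrableOn_const measure_Ioc_lt_top.ne))]
    have hpiece : ∀ i ∈ range n,
        (∫ x in ((i:ℝ)/(n:ℝ))..(((i:ℝ)+1)/(n:ℝ)), fD x ^ t) = d (i+1) ^ t / (n:ℝ) := by
      intro i hi
      have he : ∀ x ∈ Set.Ioo ((i:ℝ)/(n:ℝ)) (((i:ℝ)+1)/(n:ℝ)),
          fD x ^ t = (fun _ : ℝ => d (i+1) ^ t) x :=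
        fun x hx => by rw [hfval i (mem_range.mp hi) x hx]
      rw [pieceEq (hab i) he, intervalIntegral.integral_const, smul_eq_mul]
      have h2 : ((i:ℝ)+1)/(n:ℝ) - (i:ℝ)/(n:ℝ) = 1/(n:ℝ) := by
        field_simp
        ring
      rw [h2]; ring
    rw [Finset.sum_congr rfl hpiece, ← Finset.sum_div]
  -- Step 2: closed form of slideFun
  have hσ : ∀ t : ℝ, slideFun 1 fD t
      = Real.log (∑ j ∈ range n, d (j+1) ^ t)
        - ∑ i ∈ range n, d (i+1) ^ t / (∑ j ∈ range n, d (j+1) ^ t)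
            * (t * Real.log (d (i+1))
              + (((i:ℝ)+1) * Real.log ((i:ℝ)+1) - (i:ℝ) * Real.log (i:ℝ))) := by
    intro t
    have hCpos : ∀ i ∈ range n,
        0 < d (i+1) ^ t / ((∑ j ∈ range n, d (j+1) ^ t) / (n:ℝ)) := fun i hi =>
      div_pos (Real.rpow_pos_of_pos (hd i hi) t) (div_pos (hSpos t) hN)
    unfold slideFun
    rw [hA t]
    rw [splitIntegral hn _ (fun i hi => by
      refine pieceInt (hab i)
        (ψ := fun x => (d (i+1) ^ t / ((∑ j ∈ range n, d (j+1) ^ t) / (n:ℝ)))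
          * Real.log (x * (d (i+1) ^ t / ((∑ j ∈ range n, d (j+1) ^ t) / (n:ℝ)))))
        (fun x hx => by rw [hfval i hi x hx]) ?_
      have h3 := integrableOn_c_log (hCpos i (mem_range.mpr hi)) (ha0 i)
        (b := ((i:ℝ)+1)/(n:ℝ))
      refine h3.congr_fun (fun x _ => by beta_reduce; rw [mul_comm x]) measurableSet_Ioc)]
    have hterm : ∀ i ∈ range n,
        (∫ x in ((i:ℝ)/(n:ℝ))..(((i:ℝ)+1)/(n:ℝ)),
          (fD x ^ t / ((∑ j ∈ range n, d (j+1) ^ t) / (n:ℝ)))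
            * Real.log (x * (fD x ^ t / ((∑ j ∈ range n, d (j+1) ^ t) / (n:ℝ)))))
        = d (i+1) ^ t / (∑ j ∈ range n, d (j+1) ^ t)
            * (t * Real.log (d (i+1))
              + (((i:ℝ)+1) * Real.log ((i:ℝ)+1) - (i:ℝ) * Real.log (i:ℝ)))
          - d (i+1) ^ t / (∑ j ∈ range n, d (j+1) ^ t)
            * (Real.log (∑ j ∈ range n, d (j+1) ^ t) + 1) := by
      intro i hi
      have hi' := mem_range.mp hi
      have hC := hCpos i hi
      have he : ∀ x ∈ Set.Ioo ((i:ℝ)/(n:ℝ)) (((i:ℝ)+1)/(n:ℝ)),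
          (fD x ^ t / ((∑ j ∈ range n, d (j+1) ^ t) / (n:ℝ)))
            * Real.log (x * (fD x ^ t / ((∑ j ∈ range n, d (j+1) ^ t) / (n:ℝ))))
          = (d (i+1) ^ t / ((∑ j ∈ range n, d (j+1) ^ t) / (n:ℝ)))
            * Real.log (x * (d (i+1) ^ t / ((∑ j ∈ range n, d (j+1) ^ t) / (n:ℝ)))) :=
        fun x hx => by rw [hfval i hi' x hx]
      rw [pieceEq (hab i) he]
      have he2 : ∀ x ∈ Set.Ioo ((i:ℝ)/(n:ℝ)) (((i:ℝ)+1)/(n:ℝ)),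
          (d (i+1) ^ t / ((∑ j ∈ range n, d (j+1) ^ t) / (n:ℝ)))
            * Real.log (x * (d (i+1) ^ t / ((∑ j ∈ range n, d (j+1) ^ t) / (n:ℝ))))
          = (d (i+1) ^ t / ((∑ j ∈ range n, d (j+1) ^ t) / (n:ℝ)))
            * Real.log (x * (d (i+1) ^ t / ((∑ j ∈ range n, d (j+1) ^ t) / (n:ℝ)))) :=
        fun x _ => rfl
      rw [integral_c_log (ha0 i) (hab i) hC]
      rw [helper_xn_log hN hC (by positivity : (0:ℝ) ≤ (i:ℝ)+1),
        helper_xn_log hN hC (Nat.cast_nonneg i)]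
      have hlogC : Real.log (d (i+1) ^ t / ((∑ j ∈ range n, d (j+1) ^ t) / (n:ℝ)))
          = t * Real.log (d (i+1)) - Real.log (∑ j ∈ range n, d (j+1) ^ t)
            + Real.log (n:ℝ) := by
        rw [Real.log_div (Real.rpow_pos_of_pos (hd i hi) t).ne'
            (div_pos (hSpos t) hN).ne',
          Real.log_div (hSpos t).ne' hN.ne', Real.log_rpow (hd i hi)]
        ring
      rw [hlogC]
      have hSne : (∑ j ∈ range n, d (j+1) ^ t) ≠ 0 := (hSpos t).ne'
      field_simp
      ring
    rw [Finset.sum_congr rfl hterm, Finset.sum_sub_distrib]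
    have h1 : ∑ i ∈ range n, d (i+1) ^ t / (∑ j ∈ range n, d (j+1) ^ t)
          * (Real.log (∑ j ∈ range n, d (j+1) ^ t) + 1)
        = Real.log (∑ j ∈ range n, d (j+1) ^ t) + 1 := by
      rw [← Finset.sum_mul, ← Finset.sum_div, div_self (hSpos t).ne', one_mul]
    rw [h1]; ring
  -- Step 3: derivative of the closed form at 0
  have hS0ne : (∑ j ∈ range n, d (j+1) ^ (0:ℝ)) ≠ 0 := (hSpos 0).ne'
  have he0 : ∀ i ∈ range n,
      HasDerivAt (fun t : ℝ => d (i+1) ^ t) (Real.log (d (i+1))) 0 := by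
    intro i hi
    have h := (Real.hasStrictDerivAt_const_rpow (hd i hi) (0:ℝ)).hasDerivAt
    simpa [Real.rpow_zero] using h
  have hSderiv : HasDerivAt (fun t : ℝ => ∑ j ∈ range n, d (j+1) ^ t)
      (∑ j ∈ range n, Real.log (d (j+1))) 0 := HasDerivAt.fun_sum he0
  have hlogS : HasDerivAt (fun t : ℝ => Real.log (∑ j ∈ range n, d (j+1) ^ t))
      ((∑ j ∈ range n, Real.log (d (j+1))) / (n:ℝ)) 0 := by
    have h := hSderiv.log hS0ne
    simpa [hS0eq] using h
  have hu : ∀ i ∈ range n, HasDerivAt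
      (fun t : ℝ => d (i+1) ^ t / (∑ j ∈ range n, d (j+1) ^ t)
        * (t * Real.log (d (i+1))
          + (((i:ℝ)+1) * Real.log ((i:ℝ)+1) - (i:ℝ) * Real.log (i:ℝ))))
      ((Real.log (d (i+1)) - (∑ j ∈ range n, Real.log (d (j+1)))/(n:ℝ)) / (n:ℝ)
          * (((i:ℝ)+1) * Real.log ((i:ℝ)+1) - (i:ℝ) * Real.log (i:ℝ))
        + Real.log (d (i+1)) / (n:ℝ)) 0 := by
    intro i hi
    have h2 := (he0 i hi).div hSderiv hS0ne
    have h3 : HasDerivAt (fun t : ℝ => t * Real.log (d (i+1))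
        + (((i:ℝ)+1) * Real.log ((i:ℝ)+1) - (i:ℝ) * Real.log (i:ℝ)))
        (Real.log (d (i+1))) 0 := by
      simpa using ((hasDerivAt_id (0:ℝ)).mul_const (Real.log (d (i+1)))).add_const
        (((i:ℝ)+1) * Real.log ((i:ℝ)+1) - (i:ℝ) * Real.log (i:ℝ))
    have h4 := h2.mul h3
    refine h4.congr_deriv ?_
    simp only [Pi.div_apply, Real.rpow_zero, hS0eq, Finset.sum_const, Finset.card_range,
      nsmul_eq_mul, mul_one, zero_mul, zero_add, one_mul]
    field_simp
  have hFderiv := hlogS.sub (HasDerivAt.fun_sum hu)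
  have hfun : slideFun 1 fD = fun t : ℝ =>
      Real.log (∑ j ∈ range n, d (j+1) ^ t)
        - ∑ i ∈ range n, d (i+1) ^ t / (∑ j ∈ range n, d (j+1) ^ t)
            * (t * Real.log (d (i+1))
              + (((i:ℝ)+1) * Real.log ((i:ℝ)+1) - (i:ℝ) * Real.log (i:ℝ))) :=
    funext hσ
  rw [hfun]
  refine HasDerivAt.hasDerivWithinAt ?_
  have hval : (∑ j ∈ range n, Real.log (d (j+1))) / (n:ℝ)
      - ∑ i ∈ range n,
          ((Real.log (d (i+1)) - (∑ j ∈ range n, Real.log (d (j+1)))/(n:ℝ)) / (n:ℝ)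
            * (((i:ℝ)+1) * Real.log ((i:ℝ)+1) - (i:ℝ) * Real.log (i:ℝ))
          + Real.log (d (i+1)) / (n:ℝ))
      = (1 / n) * ∑ i ∈ Finset.Icc 2 (n - 1),
          (i : ℝ) * Real.log i * Real.log (d (i + 1) / d i) +
        (Real.log n / n) * ∑ i ∈ Finset.Icc 1 (n - 1), Real.log (d i / d n) := by
    rw [← final_algebra n hn d hpos]
    have htel : ∑ i ∈ range n,
        (((i:ℝ)+1) * Real.log ((i:ℝ)+1) - (i:ℝ) * Real.log (i:ℝ))
        = (n:ℝ) * Real.log (n:ℝ) := by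
      calc ∑ i ∈ range n, (((i:ℝ)+1) * Real.log ((i:ℝ)+1) - (i:ℝ) * Real.log (i:ℝ))
          = ∑ i ∈ range n, ((fun j : ℕ => (j:ℝ) * Real.log (j:ℝ)) (i+1)
              - (fun j : ℕ => (j:ℝ) * Real.log (j:ℝ)) i) := by
            refine Finset.sum_congr rfl fun i _ => ?_
            push_cast; ring
        _ = (n:ℝ) * Real.log (n:ℝ) := by
            exact (Finset.sum_range_sub (fun j : ℕ => (j:ℝ) * Real.log (j:ℝ)) n).trans
              (by simp)
    rw [Finset.sum_add_distrib]
    have hsplit : ∑ i ∈ range n,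
        ((Real.log (d (i+1)) - (∑ j ∈ range n, Real.log (d (j+1)))/(n:ℝ)) / (n:ℝ)
          * (((i:ℝ)+1) * Real.log ((i:ℝ)+1) - (i:ℝ) * Real.log (i:ℝ)))
        = (1/(n:ℝ)) * (∑ i ∈ range n, Real.log (d (i+1))
              * (((i:ℝ)+1) * Real.log ((i:ℝ)+1) - (i:ℝ) * Real.log (i:ℝ)))
          - (∑ j ∈ range n, Real.log (d (j+1)))/(n:ℝ)^2
              * ((n:ℝ) * Real.log (n:ℝ)) := by
      rw [← htel]
      rw [show ∑ i ∈ range n,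
        ((Real.log (d (i+1)) - (∑ j ∈ range n, Real.log (d (j+1)))/(n:ℝ)) / (n:ℝ)
          * (((i:ℝ)+1) * Real.log ((i:ℝ)+1) - (i:ℝ) * Real.log (i:ℝ)))
        = ∑ i ∈ range n,
          ((1/(n:ℝ)) * (Real.log (d (i+1))
            * (((i:ℝ)+1) * Real.log ((i:ℝ)+1) - (i:ℝ) * Real.log (i:ℝ)))
          - (∑ j ∈ range n, Real.log (d (j+1)))/(n:ℝ)^2
            * (((i:ℝ)+1) * Real.log ((i:ℝ)+1) - (i:ℝ) * Real.log (i:ℝ)))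
        from Finset.sum_congr rfl fun i _ => by ring]
      rw [Finset.sum_sub_distrib, ← Finset.mul_sum, ← Finset.mul_sum]
    rw [hsplit, ← Finset.sum_div]
    field_simp
    ring
  rw [← hval]
  exact hFderiv
end
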